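/- Let Δ be an irreducible root system with Coxeter number h. For every simple root α, one has q_α ≤ h, and moreover q_α = h if and only if the fundamental weight ϖ_α is minuscule (i.e., (ϖ_α, γ^∨) ≤ 1 for all γ ∈ Δ⁺). Furthermore q_α ≥ rk(Δ) + 1 for every α. -/

import Mathlib

open scoped RealInnerProductSpace
open scoped Classical

/-- An (irreducible, reduced, crystallographic) root system in a real inner product
space `V`, together with a choice of base (simple roots), coordinate functions with
respect to the base, and fundamental weights. -/
structure RootSystemData (V : Type*) [NormedAddCommGroup V] [InnerProductSpace ℝ V] where
  Δ : Finset V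
  base : Finset V
  base_sub : base ⊆ Δ
  root_ne_zero : ∀ γ ∈ Δ, γ ≠ 0
  span_eq_top : Submodule.span ℝ (Δ : Set V) = ⊤
  reflect_mem : ∀ γ ∈ Δ, ∀ δ ∈ Δ, δ - (2 * ⟪δ, γ⟫ / ⟪γ, γ⟫) • γ ∈ Δ
  crystallographic : ∀ γ ∈ Δ, ∀ δ ∈ Δ, ∃ k : ℤ, 2 * ⟪δ, γ⟫ / ⟪γ, γ⟫ = (k : ℝ)
  reduced : ∀ γ ∈ Δ, (2 : ℝ) • γ ∉ Δ
  coord : V → V → ℝ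
  coord_add : ∀ α x y, coord (x + y) α = coord x α + coord y α
  coord_smul : ∀ α (c : ℝ) (x : V), coord (c • x) α = c * coord x α
  coord_base : ∀ α ∈ base, ∀ β ∈ base, coord β α = if β = α then 1 else 0
  root_decomp : ∀ γ ∈ Δ, γ = ∑ α ∈ base, coord γ α • α
  pos_or_neg : ∀ γ ∈ Δ, (∀ α ∈ base, 0 ≤ coord γ α) ∨ (∀ α ∈ base, coord γ α ≤ 0)
  coord_int : ∀ γ ∈ Δ, ∀ α ∈ base, ∃ k : ℤ, coord γ α = (k : ℝ)
  irreducible : ∀ S ⊆ Δ, S.Nonempty →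
    (∀ γ ∈ S, ∀ δ ∈ Δ, δ ∉ S → ⟪γ, δ⟫ = 0) → S = Δ
  fw : V → V
  fw_spec : ∀ α ∈ base, ∀ β ∈ base, ⟪fw α, β⟫ = if β = α then ⟪α, α⟫ / 2 else 0

namespace RootSystemData

variable {V : Type*} [NormedAddCommGroup V] [InnerProductSpace ℝ V]

/-- The set of positive roots (nonnegative coordinates w.r.t. the base). -/
noncomputable def posRoots (R : RootSystemData V) : Finset V :=
  R.Δ.filter fun γ => ∀ α ∈ R.base, 0 ≤ R.coord γ α

/-- The height of a root: the sum of its coordinates in the base. -/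
noncomputable def ht (R : RootSystemData V) (γ : V) : ℝ :=
  ∑ α ∈ R.base, R.coord γ α

/-- The height of the coroot `γ^∨` in the dual root system. -/
noncomputable def dualHt (R : RootSystemData V) (γ : V) : ℝ :=
  ∑ α ∈ R.base, R.coord γ α * ⟪α, α⟫ / ⟪γ, γ⟫

/-- `R_α`: the set of roots having positive inner product with the fundamental
weight `ϖ_α`. -/
noncomputable def Rset (R : RootSystemData V) (α : V) : Finset V :=
  R.Δ.filter fun γ => 0 < ⟪γ, R.fw α⟫

/-- `Δ_α(i)`: the set of roots whose coefficient of `α` equals `i`. -/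
noncomputable def level (R : RootSystemData V) (α : V) (i : ℤ) : Finset V :=
  R.Δ.filter fun γ => R.coord γ α = (i : ℝ)

end RootSystemData

namespace RootSystemData

variable {V : Type*} [NormedAddCommGroup V] [InnerProductSpace ℝ V]

section Basic

variable (R : RootSystemData V)

lemma coord_zero (β : V) : R.coord 0 β = 0 := by
  have := R.coord_smul β 0 0
  simpa using this

lemma coord_neg (β x : V) : R.coord (-x) β = - R.coord x β := by
  have := R.coord_smul β (-1) x
  simpa using this

lemma coord_sub (β x y : V) : R.coord (x - y) β = R.coord x β - R.coord y β := by
  rw [sub_eq_add_neg, R.coord_add, R.coord_neg]; ring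

lemma coord_sum {ι : Type*} (s : Finset ι) (f : ι → V) (β : V) :
    R.coord (∑ i ∈ s, f i) β = ∑ i ∈ s, R.coord (f i) β := by
  classical
  induction s using Finset.induction_on with
  | empty => simpa using R.coord_zero β
  | insert a s' h ih => rw [Finset.sum_insert h, Finset.sum_insert h, R.coord_add, ih]

lemma root_inner_self_pos {γ : V} (hγ : γ ∈ R.Δ) : 0 < ⟪γ, γ⟫ := by
  have h1 : ⟪γ, γ⟫ ≠ 0 := fun h => R.root_ne_zero γ hγ (inner_self_eq_zero.mp h)
  exact lt_of_le_of_ne real_inner_self_nonneg (Ne.symm h1)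

lemma root_inner_self_ne {γ : V} (hγ : γ ∈ R.Δ) : ⟪γ, γ⟫ ≠ 0 :=
  ne_of_gt (R.root_inner_self_pos hγ)

lemma neg_mem {γ : V} (hγ : γ ∈ R.Δ) : -γ ∈ R.Δ := by
  have h := R.reflect_mem γ hγ γ hγ
  rw [mul_div_assoc, div_self (R.root_inner_self_ne hγ)] at h
  have : γ - (2 * 1 : ℝ) • γ = -γ := by
    rw [show ((2 : ℝ) * 1) = (2:ℝ) by ring]; module
  rwa [this] at h

lemma span_base : Submodule.span ℝ (R.base : Set V) = ⊤ := by
  refine top_unique ?_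
  rw [← R.span_eq_top]
  refine Submodule.span_le.2 ?_
  intro γ hγ
  have hdec := R.root_decomp γ hγ
  rw [hdec]
  exact Submodule.sum_mem _ fun β hβ =>
    Submodule.smul_mem _ _ (Submodule.subset_span hβ)

/-- Linear functionals built from `coord` and the inner product agree on all of `V`
once they agree on the base. -/
lemma inner_fw (x : V) {β : V} (hβ : β ∈ R.base) :
    ⟪x, R.fw β⟫ = R.coord x β * (⟪β, β⟫ / 2) := by
  have hx : x ∈ Submodule.span ℝ (R.base : Set V) := by rw [R.span_base]; trivial
  induction hx using Submodule.span_induction with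
  | mem y hy =>
      rcases hy with hy
      have := R.fw_spec β hβ y hy
      rw [real_inner_comm, this, R.coord_base β hβ y hy]
      by_cases h : y = β <;> simp [h]
  | zero => simp [R.coord_zero]
  | add y z _ _ hy hz =>
      rw [inner_add_left, R.coord_add, hy, hz]; ring
  | smul c y _ hy =>
      rw [real_inner_smul_left, R.coord_smul, hy]; ring

lemma inner_root_base {γ β : V} (hγ : γ ∈ R.Δ) (hβ : β ∈ R.base) :
    ⟪γ, R.fw β⟫ = R.coord γ β * (⟪β, β⟫ / 2) := R.inner_fw γ hβ

lemma coord_eq_int {γ β : V} (hγ : γ ∈ R.Δ) (hβ : β ∈ R.base) : ∃ k : ℤ, R.coord γ β = k :=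
  R.coord_int γ hγ β hβ

end Basic

/-- The reflection in the root `γ`. -/
noncomputable def sref (γ x : V) : V := x - (2 * ⟪x, γ⟫ / ⟪γ, γ⟫) • γ

section Reflection

variable (R : RootSystemData V)

lemma sref_mem {γ δ : V} (hγ : γ ∈ R.Δ) (hδ : δ ∈ R.Δ) : sref γ δ ∈ R.Δ :=
  R.reflect_mem γ hγ δ hδ

lemma inner_sref (x y γ : V) (h : ⟪γ, γ⟫ ≠ 0) : ⟪sref γ x, sref γ y⟫ = ⟪x, y⟫ := by
  unfold sref
  rw [inner_sub_left, inner_sub_right, inner_sub_right, real_inner_smul_left,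
    real_inner_smul_left, real_inner_smul_right, real_inner_smul_right]
  rw [real_inner_comm γ y]
  field_simp
  ring

lemma sref_inner_self (x γ : V) (h : ⟪γ, γ⟫ ≠ 0) : ⟪sref γ x, sref γ x⟫ = ⟪x, x⟫ :=
  inner_sref x x γ h

lemma sref_sref (x γ : V) (h : ⟪γ, γ⟫ ≠ 0) : sref γ (sref γ x) = x := by
  unfold sref
  rw [inner_sub_left, real_inner_smul_left]
  field_simp
  module

lemma sref_self (γ : V) (h : ⟪γ, γ⟫ ≠ 0) : sref γ γ = -γ := by
  unfold sref
  rw [mul_div_assoc, div_self h]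
  module

lemma coord_sref (R : RootSystemData V) (γ x β : V) :
    R.coord (sref γ x) β = R.coord x β - (2 * ⟪x, γ⟫ / ⟪γ, γ⟫) * R.coord γ β := by
  unfold sref
  rw [R.coord_sub, R.coord_smul]

lemma inner_sref_right (x y γ : V) (h : ⟪γ, γ⟫ ≠ 0) : ⟪x, sref γ y⟫ = ⟪sref γ x, y⟫ := by
  conv_lhs => rw [← sref_sref x γ h]
  rw [inner_sref _ _ _ h]

end Reflection

end RootSystemData

namespace RootSystemData

variable {V : Type*} [NormedAddCommGroup V] [InnerProductSpace ℝ V]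

section PosNeg

variable (R : RootSystemData V)

lemma mem_posRoots {γ : V} :
    γ ∈ R.posRoots ↔ γ ∈ R.Δ ∧ ∀ β ∈ R.base, 0 ≤ R.coord γ β := Finset.mem_filter

lemma posRoots_subset : R.posRoots ⊆ R.Δ := Finset.filter_subset _ _

lemma exists_coord_ne_zero {γ : V} (hγ : γ ∈ R.Δ) : ∃ β ∈ R.base, R.coord γ β ≠ 0 := by
  by_contra h
  push_neg at h
  apply R.root_ne_zero γ hγ
  have := R.root_decomp γ hγ
  rw [this]
  refine Finset.sum_eq_zero fun β hβ => ?_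
  rw [h β hβ, zero_smul]

lemma pos_of_coord_pos {γ β : V} (hγ : γ ∈ R.Δ) (hβ : β ∈ R.base)
    (h : 0 < R.coord γ β) : γ ∈ R.posRoots := by
  rcases R.pos_or_neg γ hγ with hp | hn
  · exact (R.mem_posRoots).2 ⟨hγ, hp⟩
  · exact absurd (hn β hβ) (not_le.2 h)

lemma neg_mem_posRoots {γ : V} (hγ : γ ∈ R.Δ) (h : γ ∉ R.posRoots) : -γ ∈ R.posRoots := by
  rcases R.pos_or_neg γ hγ with hp | hn
  · exact absurd ((R.mem_posRoots).2 ⟨hγ, hp⟩) h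
  · refine (R.mem_posRoots).2 ⟨R.neg_mem hγ, fun β hβ => ?_⟩
    rw [R.coord_neg]
    linarith [hn β hβ]

lemma not_neg_mem_posRoots {γ : V} (hγ : γ ∈ R.posRoots) : -γ ∉ R.posRoots := by
  intro h
  obtain ⟨hΔ, hc⟩ := (R.mem_posRoots).1 hγ
  obtain ⟨hΔ', hc'⟩ := (R.mem_posRoots).1 h
  obtain ⟨β, hβ, hne⟩ := R.exists_coord_ne_zero hΔ
  have h1 := hc β hβ
  have h2 := hc' β hβ
  rw [R.coord_neg] at h2
  exact hne (le_antisymm (by linarith) h1)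

lemma coord_nonneg {γ β : V} (hγ : γ ∈ R.posRoots) (hβ : β ∈ R.base) : 0 ≤ R.coord γ β :=
  ((R.mem_posRoots).1 hγ).2 β hβ

lemma exists_coord_pos {γ : V} (hγ : γ ∈ R.posRoots) : ∃ β ∈ R.base, 0 < R.coord γ β := by
  obtain ⟨β, hβ, hne⟩ := R.exists_coord_ne_zero (R.posRoots_subset hγ)
  exact ⟨β, hβ, lt_of_le_of_ne (R.coord_nonneg hγ hβ) (Ne.symm hne)⟩

lemma ht_pos {γ : V} (hγ : γ ∈ R.posRoots) : 0 < R.ht γ := by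
  obtain ⟨β, hβ, hpos⟩ := R.exists_coord_pos hγ
  have h1 : R.coord γ β ≤ R.ht γ :=
    Finset.single_le_sum (fun b hb => R.coord_nonneg hγ hb) hβ
  linarith

lemma ht_int (γ : V) (hγ : γ ∈ R.Δ) : ∃ k : ℤ, R.ht γ = k := by
  unfold ht
  have : ∀ β ∈ R.base, ∃ k : ℤ, R.coord γ β = k := fun β hβ => R.coord_int γ hγ β hβ
  choose g hg using this
  exact ⟨∑ β ∈ R.base.attach, g β β.2, by
    rw [← Finset.sum_attach R.base (fun β => R.coord γ β)]
    push_cast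
    exact Finset.sum_congr rfl fun β _ => hg β β.2⟩

/-- Splitting a sum over all roots into twice the sum over positive roots,
for even functions. -/
lemma sum_roots_eq_twice (f : V → ℝ) (hf : ∀ γ ∈ R.Δ, f (-γ) = f γ) :
    ∑ γ ∈ R.Δ, f γ = 2 * ∑ γ ∈ R.posRoots, f γ := by
  classical
  have heq : R.Δ.filter (fun γ => ¬ ∀ β ∈ R.base, 0 ≤ R.coord γ β)
      = R.Δ.filter (fun γ => γ ∉ R.posRoots) := by
    apply Finset.filter_congr
    intro γ hγ
    constructor
    · intro h hmem; exact h (((R.mem_posRoots).1 hmem).2)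
    · intro h hforall; exact h ((R.mem_posRoots).2 ⟨hγ, hforall⟩)
  have hsplit :
      ∑ γ ∈ R.Δ, f γ = ∑ γ ∈ R.posRoots, f γ +
        ∑ γ ∈ R.Δ.filter (fun γ => γ ∉ R.posRoots), f γ := by
    rw [← heq]
    exact (Finset.sum_filter_add_sum_filter_not R.Δ
      (fun γ => ∀ β ∈ R.base, 0 ≤ R.coord γ β) f).symm
  have hbij : ∑ γ ∈ R.Δ.filter (fun γ => γ ∉ R.posRoots), f γ = ∑ γ ∈ R.posRoots, f γ := by
    refine Finset.sum_nbij' (fun γ => -γ) (fun γ => -γ) ?_ ?_ ?_ ?_ ?_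
    · intro γ hγ
      obtain ⟨hΔ, hn⟩ := Finset.mem_filter.1 hγ
      exact R.neg_mem_posRoots hΔ hn
    · intro γ hγ
      refine Finset.mem_filter.2 ⟨R.neg_mem (R.posRoots_subset hγ), R.not_neg_mem_posRoots hγ⟩
    · intro γ _; simp
    · intro γ _; simp
    · intro γ hγ
      exact (hf γ (Finset.mem_filter.1 hγ).1).symm
  rw [hsplit, hbij]; ring

end PosNeg

section PairLemma

variable (R : RootSystemData V)

/-- If two non-opposite roots have negative inner product, their sum is a root. -/
lemma add_mem_of_inner_neg {γ δ : V} (hγ : γ ∈ R.Δ) (hδ : δ ∈ R.Δ)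
    (hneg : ⟪γ, δ⟫ < 0) (hne : γ ≠ -δ) : γ + δ ∈ R.Δ := by
  obtain ⟨k₁, hk₁⟩ := R.crystallographic δ hδ γ hγ
  obtain ⟨k₂, hk₂⟩ := R.crystallographic γ hγ δ hδ
  have hγγ := R.root_inner_self_pos hγ
  have hδδ := R.root_inner_self_pos hδ
  have hk₁neg : (k₁ : ℝ) < 0 := by
    rw [← hk₁]
    exact div_neg_of_neg_of_pos (by linarith) hδδ
  have hk₂neg : (k₂ : ℝ) < 0 := by
    rw [← hk₂]
    have : ⟪δ, γ⟫ < 0 := by rwa [real_inner_comm]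
    exact div_neg_of_neg_of_pos (by linarith) hγγ
  have hk₁' : k₁ ≤ -1 := by
    have : k₁ < 0 := by exact_mod_cast hk₁neg
    omega
  have hk₂' : k₂ ≤ -1 := by
    have : k₂ < 0 := by exact_mod_cast hk₂neg
    omega
  have hprod : (k₁ : ℝ) * k₂ = 4 * ⟪γ, δ⟫ ^ 2 / (⟪γ, γ⟫ * ⟪δ, δ⟫) := by
    rw [← hk₁, ← hk₂, real_inner_comm δ γ]
    field_simp
    ring
  by_cases hp : ∃ t : ℝ, γ = t • δ
  · obtain ⟨t, rfl⟩ := hp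
    have htval : (k₁ : ℝ) = 2 * t := by
      rw [← hk₁, real_inner_smul_left, mul_div_assoc, mul_div_assoc,
        div_self (ne_of_gt hδδ)]
      ring
    have ht0 : t ≠ 0 := by
      rintro rfl
      simp at hneg
    have hkk : (k₁ : ℝ) * k₂ = 4 := by
      rw [← hk₁, ← hk₂]
      simp only [real_inner_smul_left, real_inner_smul_right]
      field_simp
      ring
    have hkkZ : k₁ * k₂ = 4 := by exact_mod_cast hkk
    have hk₁ge : -4 ≤ k₁ := by nlinarith
    have htval' : (2:ℝ) * t = k₁ := htval.symm
    interval_cases k₁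
    · -- k₁ = -4 : t = -2
      have ht2 : t = -2 := by
        have : (2:ℝ) * t = -4 := by exact_mod_cast htval'
        linarith
      subst ht2
      exact absurd (by
        have : ((-2 : ℝ)) • δ = (2 : ℝ) • (-δ) := by module
        rw [this] at hγ
        exact hγ) (R.reduced (-δ) (R.neg_mem hδ))
    · omega
    · -- k₁ = -2 : t = -1
      have ht2 : t = -1 := by
        have : (2:ℝ) * t = -2 := by exact_mod_cast htval'
        linarith
      subst ht2
      exact absurd (by module) hne
    · -- k₁ = -1 : t = -1/2, δ = 2•(-γ)
      have ht : t = -(1/2) := by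
        have : (2:ℝ) * t = -1 := by exact_mod_cast htval'
        linarith
      subst ht
      have : δ = (2 : ℝ) • (-((-(1/2) : ℝ) • δ)) := by module
      rw [this] at hδ
      exact absurd hδ (R.reduced _ (R.neg_mem hγ))
  · -- not proportional: strict Cauchy-Schwarz
    have hCS : ⟪γ, δ⟫ ^ 2 < ⟪γ, γ⟫ * ⟪δ, δ⟫ := by
      have hx : (⟪δ, δ⟫ • γ - ⟪γ, δ⟫ • δ) ≠ 0 := by
        intro h
        apply hp
        refine ⟨⟪γ, δ⟫ / ⟪δ, δ⟫, ?_⟩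
        have heq2 : ⟪δ, δ⟫ • γ = ⟪γ, δ⟫ • δ := by
          rw [← sub_eq_zero]; exact h
        have h3 := congrArg (fun v => (⟪δ, δ⟫)⁻¹ • v) heq2
        simp only [smul_smul] at h3
        rw [inv_mul_cancel₀ (ne_of_gt hδδ), one_smul] at h3
        rw [div_eq_inv_mul]
        exact h3
      have hxx : 0 < ⟪⟪δ, δ⟫ • γ - ⟪γ, δ⟫ • δ, ⟪δ, δ⟫ • γ - ⟪γ, δ⟫ • δ⟫ := by
        have h1 : ⟪⟪δ, δ⟫ • γ - ⟪γ, δ⟫ • δ, ⟪δ, δ⟫ • γ - ⟪γ, δ⟫ • δ⟫ ≠ 0 :=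
          fun h => hx (inner_self_eq_zero.mp h)
        exact lt_of_le_of_ne real_inner_self_nonneg (Ne.symm h1)
      have hexp : ⟪⟪δ, δ⟫ • γ - ⟪γ, δ⟫ • δ, ⟪δ, δ⟫ • γ - ⟪γ, δ⟫ • δ⟫ =
          ⟪δ, δ⟫ * (⟪γ, γ⟫ * ⟪δ, δ⟫ - ⟪γ, δ⟫ ^ 2) := by
        rw [inner_sub_left, inner_sub_right, inner_sub_right, real_inner_smul_left,
          real_inner_smul_left, real_inner_smul_left, real_inner_smul_left,
          real_inner_smul_right, real_inner_smul_right, real_inner_smul_right,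
          real_inner_smul_right, real_inner_comm δ γ]
        ring
      rw [hexp] at hxx
      nlinarith
    have hlt : (k₁ : ℝ) * k₂ < 4 := by
      rw [hprod]
      rw [div_lt_iff₀ (by positivity)]
      nlinarith
    have hltZ : k₁ * k₂ ≤ 3 := by
      have : k₁ * k₂ < 4 := by exact_mod_cast hlt
      omega
    have hcase : k₁ = -1 ∨ k₂ = -1 := by
      by_contra hcon
      push_neg at hcon
      have h1 : k₁ ≤ -2 := by omega
      have h2 : k₂ ≤ -2 := by omega
      nlinarith
    rcases hcase with h | h
    · -- sref δ γ = γ - k₁ • δ = γ + δ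
      have hmem := R.sref_mem hδ hγ
      unfold sref at hmem
      rw [hk₁, h] at hmem
      have : γ - ((-1 : ℤ) : ℝ) • δ = γ + δ := by push_cast; module
      rwa [this] at hmem
    · have hmem := R.sref_mem hγ hδ
      unfold sref at hmem
      rw [hk₂, h] at hmem
      have : δ - ((-1 : ℤ) : ℝ) • γ = γ + δ := by push_cast; module
      rwa [this] at hmem

end PairLemma

end RootSystemData

namespace RootSystemData

variable {V : Type*} [NormedAddCommGroup V] [InnerProductSpace ℝ V]

section SimpleReflections

variable (R : RootSystemData V)

lemma base_mem_posRoots {β : V} (hβ : β ∈ R.base) : β ∈ R.posRoots := by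
  refine (R.mem_posRoots).2 ⟨R.base_sub hβ, fun δ hδ => ?_⟩
  rw [R.coord_base δ hδ β hβ]
  by_cases h : β = δ <;> simp [h]

lemma coord_simple {β δ : V} (hβ : β ∈ R.base) (hδ : δ ∈ R.base) :
    R.coord β δ = if β = δ then 1 else 0 := R.coord_base δ hδ β hβ

lemma ht_simple {β : V} (hβ : β ∈ R.base) : R.ht β = 1 := by
  unfold ht
  rw [Finset.sum_eq_single β (fun δ hδ hne => by
    rw [R.coord_simple hβ hδ]; simp [Ne.symm hne])
    (fun h => absurd hβ h)]
  rw [R.coord_simple hβ hβ]; simp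

/-- A positive root whose support is contained in `{β}` equals `β`. -/
lemma eq_simple_of_support_single {γ β : V} (hγ : γ ∈ R.posRoots) (hβ : β ∈ R.base)
    (hsupp : ∀ δ ∈ R.base, δ ≠ β → R.coord γ δ = 0) : γ = β := by
  have hγΔ := R.posRoots_subset hγ
  have hββ := R.root_inner_self_pos (R.base_sub hβ)
  have hdecomp : γ = R.coord γ β • β := by
    conv_lhs => rw [R.root_decomp γ hγΔ]
    rw [Finset.sum_eq_single β (fun δ hδ hne => by rw [hsupp δ hδ hne, zero_smul])
      (fun h => absurd hβ h)]
  obtain ⟨k, hk⟩ := R.coord_eq_int hγΔ hβ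
  have hkpos : 1 ≤ k := by
    have h0 : 0 ≤ R.coord γ β := R.coord_nonneg hγ hβ
    have hne0 : R.coord γ β ≠ 0 := by
      intro h
      exact R.root_ne_zero γ hγΔ (by rw [hdecomp, h, zero_smul])
    have : (0:ℝ) < k := by rw [← hk]; exact lt_of_le_of_ne h0 (Ne.symm hne0)
    exact_mod_cast this
  rcases eq_or_lt_of_le hkpos with h1 | h2
  · rw [hdecomp, hk, ← h1]; simp
  · -- k ≥ 2 : contradiction with reduced / crystallographic
    exfalso
    obtain ⟨m, hm⟩ := R.crystallographic γ hγΔ β (R.base_sub hβ)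
    rw [hdecomp, hk] at hm
    rw [real_inner_smul_right, real_inner_smul_left, real_inner_smul_right] at hm
    have hkR : (0:ℝ) < k := by exact_mod_cast hkpos
    have hk0 : (k:ℝ) ≠ 0 := ne_of_gt hkR
    have hm' : 2 / (k:ℝ) = m := by
      rw [← hm]
      field_simp
    have hmk : (m:ℝ) * k = 2 := by
      rw [← hm']
      field_simp
    have hmkZ : m * k = 2 := by exact_mod_cast hmk
    have h2' : 2 ≤ k := h2
    have hmpos : 1 ≤ m := by
      rcases le_or_gt m 0 with h | h
      · exfalso; nlinarith
      · omega
    have hk2 : k = 2 := by nlinarith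
    have hgeq : γ = (2:ℝ) • β := by
      rw [hdecomp, hk, hk2]
      norm_num
    exact R.reduced β (R.base_sub hβ) (hgeq ▸ hγΔ)

lemma sref_simple_mem_pos {β γ : V} (hβ : β ∈ R.base) (hγ : γ ∈ R.posRoots)
    (hne : γ ≠ β) : sref β γ ∈ R.posRoots ∧ sref β γ ≠ β := by
  have hγΔ := R.posRoots_subset hγ
  have hβΔ := R.base_sub hβ
  have hmem : sref β γ ∈ R.Δ := R.sref_mem hβΔ hγΔ
  have hcoord : ∀ δ ∈ R.base, δ ≠ β → R.coord (sref β γ) δ = R.coord γ δ := by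
    intro δ hδ hneδ
    rw [R.coord_sref, R.coord_simple hβ hδ]
    simp [hneδ]
    intro h; exact absurd h.symm hneδ
  obtain ⟨δ₀, hδ₀, hδ₀ne⟩ : ∃ δ ∈ R.base, δ ≠ β ∧ 0 < R.coord γ δ := by
    by_contra hcon
    push_neg at hcon
    apply hne
    refine R.eq_simple_of_support_single hγ hβ fun δ hδ hneδ => ?_
    have := hcon δ hδ hneδ
    exact le_antisymm this (R.coord_nonneg hγ hδ)
  have hpos : sref β γ ∈ R.posRoots := by
    refine R.pos_of_coord_pos hmem hδ₀ ?_
    rw [hcoord δ₀ hδ₀ hδ₀ne.1]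
    exact hδ₀ne.2
  refine ⟨hpos, fun h => ?_⟩
  have hββ := R.root_inner_self_ne hβΔ
  have hγβ : γ = -β := by
    have h2 : sref β (sref β γ) = sref β β := by rw [h]
    rw [sref_sref γ β hββ, sref_self β hββ] at h2
    exact h2
  have hc : R.coord γ β = -1 := by
    rw [hγβ, R.coord_neg, R.coord_simple hβ hβ]; simp
  have := R.coord_nonneg hγ hβ
  rw [hc] at this
  linarith

lemma sum_pos_npair_right {β : V} (hβ : β ∈ R.base) :
    ∑ γ ∈ R.posRoots, 2 * ⟪γ, β⟫ / ⟪β, β⟫ = 2 := by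
  have hβΔ := R.base_sub hβ
  have hββ := R.root_inner_self_pos hβΔ
  have hmem : β ∈ R.posRoots := R.base_mem_posRoots hβ
  rw [← Finset.add_sum_erase _ _ hmem]
  have hzero : ∑ γ ∈ R.posRoots.erase β, 2 * ⟪γ, β⟫ / ⟪β, β⟫ = 0 := by
    refine Finset.sum_involution (fun γ _ => sref β γ) ?_ ?_ ?_ ?_
    · intro γ hγ
      have : ⟪sref β γ, β⟫ = -⟪γ, β⟫ := by
        unfold sref
        rw [inner_sub_left, real_inner_smul_left]
        field_simp
        ring
      rw [this]
      ring
    · intro γ hγ hne0 heq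
      exfalso
      apply hne0
      have heq' : γ - (2 * ⟪γ, β⟫ / ⟪β, β⟫) • β = γ := heq
      rw [sub_eq_self] at heq'
      rcases smul_eq_zero.mp heq' with h0 | h0
      · exact h0
      · exact absurd h0 (R.root_ne_zero β hβΔ)
    · intro γ hγ
      have hγne := (Finset.mem_erase.1 hγ).1
      have hγp := (Finset.mem_erase.1 hγ).2
      obtain ⟨h1, h2⟩ := R.sref_simple_mem_pos hβ hγp hγne
      exact Finset.mem_erase.2 ⟨h2, h1⟩
    · intro γ hγ
      exact sref_sref γ β (ne_of_gt hββ)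
  rw [hzero, add_zero, mul_div_assoc, div_self (ne_of_gt hββ)]
  ring

lemma sum_pos_npair_left {β : V} (hβ : β ∈ R.base) :
    ∑ γ ∈ R.posRoots, 2 * ⟪β, γ⟫ / ⟪γ, γ⟫ = 2 := by
  have hβΔ := R.base_sub hβ
  have hββ := R.root_inner_self_pos hβΔ
  have hmem : β ∈ R.posRoots := R.base_mem_posRoots hβ
  rw [← Finset.add_sum_erase _ _ hmem]
  have hzero : ∑ γ ∈ R.posRoots.erase β, 2 * ⟪β, γ⟫ / ⟪γ, γ⟫ = 0 := by
    refine Finset.sum_involution (fun γ _ => sref β γ) ?_ ?_ ?_ ?_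
    · intro γ hγ
      have hγΔ : γ ∈ R.Δ := R.posRoots_subset (Finset.mem_erase.1 hγ).2
      have h1 : ⟪β, sref β γ⟫ = -⟪β, γ⟫ := by
        rw [inner_sref_right _ _ _ (ne_of_gt hββ), sref_self β (ne_of_gt hββ),
          inner_neg_left]
      have h2 : ⟪sref β γ, sref β γ⟫ = ⟪γ, γ⟫ := sref_inner_self γ β (ne_of_gt hββ)
      rw [h1, h2]
      ring
    · intro γ hγ hne0 heq
      exfalso
      apply hne0
      have heq' : γ - (2 * ⟪γ, β⟫ / ⟪β, β⟫) • β = γ := heq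
      rw [sub_eq_self] at heq'
      have h2 : ⟪γ, β⟫ = 0 := by
        rcases smul_eq_zero.mp heq' with h0 | h0
        · have := (div_eq_zero_iff.mp h0).resolve_right (ne_of_gt hββ)
          linarith
        · exact absurd h0 (R.root_ne_zero β hβΔ)
      rw [real_inner_comm] at h2
      rw [h2]
      simp
    · intro γ hγ
      have hγne := (Finset.mem_erase.1 hγ).1
      have hγp := (Finset.mem_erase.1 hγ).2
      obtain ⟨h1, h2⟩ := R.sref_simple_mem_pos hβ hγp hγne
      exact Finset.mem_erase.2 ⟨h2, h1⟩
    · intro γ hγ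
      exact sref_sref γ β (ne_of_gt hββ)
  rw [hzero, add_zero, mul_div_assoc, div_self (ne_of_gt hββ)]
  ring

end SimpleReflections

/-- The sum of positive coroots. -/
noncomputable def Sv (R : RootSystemData V) : V :=
  ∑ γ ∈ R.posRoots, (2 / ⟪γ, γ⟫) • γ

section SvSection

variable (R : RootSystemData V)

lemma inner_Sv (x : V) : ⟪x, R.Sv⟫ = 2 * ∑ β ∈ R.base, R.coord x β := by
  have hx : x ∈ Submodule.span ℝ (R.base : Set V) := by rw [R.span_base]; trivial
  induction hx using Submodule.span_induction with
  | mem y hy =>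
      rcases hy with hy
      unfold Sv
      rw [inner_sum]
      rw [Finset.sum_congr rfl (fun γ _ => by rw [real_inner_smul_right]; ring :
        ∀ γ ∈ R.posRoots, ⟪y, (2 / ⟪γ, γ⟫) • γ⟫ = 2 * ⟪y, γ⟫ / ⟪γ, γ⟫)]
      rw [R.sum_pos_npair_left hy]
      have h1 : ∑ β ∈ R.base, R.coord y β = 1 := R.ht_simple hy
      rw [h1]; norm_num
  | zero => simp [R.coord_zero]
  | add y z _ _ hy hz =>
      rw [inner_add_left, hy, hz]
      rw [Finset.sum_congr rfl (fun β _ => R.coord_add β y z :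
        ∀ β ∈ R.base, R.coord (y + z) β = R.coord y β + R.coord z β)]
      rw [Finset.sum_add_distrib]
      ring
  | smul c y _ hy =>
      rw [real_inner_smul_left, hy]
      rw [Finset.sum_congr rfl (fun β _ => R.coord_smul β c y :
        ∀ β ∈ R.base, R.coord (c • y) β = c * R.coord y β)]
      rw [← Finset.mul_sum]
      ring

lemma inner_Sv_ht (x : V) : ⟪x, R.Sv⟫ = 2 * R.ht x := R.inner_Sv x

end SvSection

end RootSystemData

namespace RootSystemData

variable {V : Type*} [NormedAddCommGroup V] [InnerProductSpace ℝ V]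

section Theta

variable (R : RootSystemData V) {θ : V} (hθ : θ ∈ R.Δ)
  (hθmax : ∀ γ ∈ R.Δ, ∀ β ∈ R.base, R.coord γ β ≤ R.coord θ β)

include hθ hθmax

lemma theta_pos : θ ∈ R.posRoots := by
  refine (R.mem_posRoots).2 ⟨hθ, fun β hβ => ?_⟩
  have h1 := hθmax (-θ) (R.neg_mem hθ) β hβ
  rw [R.coord_neg] at h1
  linarith

lemma theta_inner_nonneg {γ : V} (hγ : γ ∈ R.posRoots) : 0 ≤ ⟪γ, θ⟫ := by
  by_contra hcon
  push_neg at hcon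
  have hγΔ := R.posRoots_subset hγ
  have hne : γ ≠ -θ := by
    intro h
    obtain ⟨β, hβ, hpos⟩ := R.exists_coord_pos hγ
    have h1 := R.coord_nonneg (R.theta_pos hθ hθmax) hβ
    rw [h, R.coord_neg] at hpos
    linarith
  have hsum : γ + θ ∈ R.Δ := R.add_mem_of_inner_neg hγΔ hθ hcon hne
  obtain ⟨β, hβ, hpos⟩ := R.exists_coord_pos hγ
  have h1 := hθmax (γ + θ) hsum β hβ
  rw [R.coord_add] at h1
  linarith

lemma theta_npair_le_one {γ : V} (hγ : γ ∈ R.posRoots) (hne : γ ≠ θ) :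
    2 * ⟪γ, θ⟫ / ⟪θ, θ⟫ ≤ 1 := by
  have hγΔ := R.posRoots_subset hγ
  have hθθ := R.root_inner_self_pos hθ
  obtain ⟨k, hk⟩ := R.crystallographic θ hθ γ hγΔ
  rw [hk]
  by_contra hcon
  push_neg at hcon
  have hk2 : 2 ≤ k := by
    have h1 : 1 < k := by exact_mod_cast hcon
    omega
  have hδ : sref θ γ ∈ R.Δ := R.sref_mem hθ hγΔ
  have hnegδ : -(sref θ γ) ∈ R.Δ := R.neg_mem hδ
  have hcoords : ∀ β ∈ R.base, R.coord γ β = R.coord θ β := by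
    intro β hβ
    have h1 := hθmax (-(sref θ γ)) hnegδ β hβ
    rw [R.coord_neg, R.coord_sref, hk] at h1
    have h2 := hθmax γ hγΔ β hβ
    have h3 : 0 ≤ R.coord θ β := R.coord_nonneg (R.theta_pos hθ hθmax) hβ
    have hkR : (2:ℝ) ≤ k := by exact_mod_cast hk2
    nlinarith
  apply hne
  rw [R.root_decomp γ hγΔ, R.root_decomp θ hθ]
  exact Finset.sum_congr rfl fun β hβ => by rw [hcoords β hβ]

/-- For a positive root `γ ≠ θ` not orthogonal to `θ`, `⟨γ, θ^∨⟩ = 1`. -/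
lemma theta_npair_eq_one {γ : V} (hγ : γ ∈ R.posRoots) (hne : γ ≠ θ)
    (hnz : ⟪γ, θ⟫ ≠ 0) : 2 * ⟪γ, θ⟫ = ⟪θ, θ⟫ := by
  have hγΔ := R.posRoots_subset hγ
  have hθθ := R.root_inner_self_pos hθ
  obtain ⟨k, hk⟩ := R.crystallographic θ hθ γ hγΔ
  have h1 : (k:ℝ) ≤ 1 := by rw [← hk]; exact R.theta_npair_le_one hθ hθmax hγ hne
  have h0 : (0:ℝ) < k := by
    rw [← hk]
    apply div_pos _ hθθ
    have := R.theta_inner_nonneg hθ hθmax hγ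
    rcases lt_or_eq_of_le this with h | h
    · linarith
    · exact absurd h.symm hnz
  have hk1 : k = 1 := by
    have ha : 0 < k := by exact_mod_cast h0
    have hb : k ≤ 1 := by exact_mod_cast h1
    omega
  rw [hk1] at hk
  have h2 : 2 * ⟪γ, θ⟫ / ⟪θ, θ⟫ = 1 := by rw [hk]; norm_num
  field_simp at h2
  linarith

end Theta

section FwIntegrality

variable (R : RootSystemData V) {α : V} (hα : α ∈ R.base)

include hα

lemma fw_inner_root {γ : V} (hγ : γ ∈ R.Δ) :
    ⟪R.fw α, γ⟫ = R.coord γ α * (⟪α, α⟫ / 2) := by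
  rw [← real_inner_comm]
  exact R.inner_fw γ hα

lemma fw_inner_pos_nonneg {γ : V} (hγ : γ ∈ R.posRoots) : 0 ≤ ⟪R.fw α, γ⟫ := by
  rw [R.fw_inner_root hα (R.posRoots_subset hγ)]
  have h1 := R.coord_nonneg hγ hα
  have h2 := R.root_inner_self_pos (R.base_sub hα)
  positivity

/-- Integrality of the pairing of the fundamental weight with coroots. -/
lemma fw_npair_int {γ : V} (hγΔ0 : γ ∈ R.Δ) :
    ∃ k : ℤ, 2 * ⟪R.fw α, γ⟫ / ⟪γ, γ⟫ = k := by
  have key : ∀ m : ℕ, ∀ γ ∈ R.posRoots, R.ht γ ≤ m →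
      ∃ k : ℤ, 2 * ⟪R.fw α, γ⟫ / ⟪γ, γ⟫ = k := by
    intro m
    induction m with
    | zero =>
        intro γ hγ hht
        exact absurd hht (not_le.2 (by simpa using R.ht_pos hγ))
    | succ m ih =>
        intro γ hγp hht
        have hγΔ := R.posRoots_subset hγp
        obtain ⟨β, hβ, hβpos⟩ : ∃ β ∈ R.base, 0 < ⟪γ, β⟫ := by
          by_contra hcon
          push_neg at hcon
          have hexp : ⟪γ, γ⟫ ≤ 0 := by
            nth_rewrite 1 [R.root_decomp γ hγΔ]
            rw [sum_inner]
            apply Finset.sum_nonpos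
            intro β hβ
            rw [real_inner_smul_left]
            exact mul_nonpos_of_nonneg_of_nonpos (R.coord_nonneg hγp hβ) (by
              rw [real_inner_comm]; exact hcon β hβ)
          exact absurd hexp (not_le.2 (R.root_inner_self_pos hγΔ))
        by_cases hγβ : γ = β
        · subst hγβ
          by_cases h : γ = α
          · refine ⟨1, ?_⟩
            rw [R.fw_spec α hα γ hβ, if_pos h, h]
            have hαα := R.root_inner_self_ne (R.base_sub hα)
            push_cast
            field_simp
          · refine ⟨0, ?_⟩
            rw [R.fw_spec α hα γ hβ, if_neg h]
            simp
        · -- reflect down in the simple root β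
          obtain ⟨hδp, _⟩ := R.sref_simple_mem_pos hβ hγp hγβ
          have hβΔ := R.base_sub hβ
          have hδΔ : sref β γ ∈ R.Δ := R.posRoots_subset hδp
          have hββ := R.root_inner_self_pos hβΔ
          obtain ⟨k, hk⟩ := R.crystallographic β hβΔ γ hγΔ
          have hk1 : 1 ≤ k := by
            have : (0:ℝ) < k := by
              rw [← hk]
              exact div_pos (by linarith) hββ
            exact_mod_cast this
          have hhtδ : R.ht (sref β γ) = R.ht γ - k := by
            unfold ht
            rw [Finset.sum_congr rfl (fun χ hχ => R.coord_sref β γ χ :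
              ∀ χ ∈ R.base, R.coord (sref β γ) χ
                = R.coord γ χ - (2 * ⟪γ, β⟫ / ⟪β, β⟫) * R.coord β χ)]
            rw [Finset.sum_sub_distrib, ← Finset.mul_sum]
            have h1 : ∑ χ ∈ R.base, R.coord β χ = 1 := R.ht_simple hβ
            rw [h1, hk]
            ring
          have hhtle : R.ht (sref β γ) ≤ m := by
            rw [hhtδ]
            push_cast at hht ⊢
            have : (1:ℝ) ≤ k := by exact_mod_cast hk1
            linarith
          obtain ⟨k', hk'⟩ := ih (sref β γ) hδp hhtle
          have hγeq : γ = sref β (sref β γ) := (sref_sref γ β (ne_of_gt hββ)).symm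
          have hnorm : ⟪γ, γ⟫ = ⟪sref β γ, sref β γ⟫ := by
            conv_lhs => rw [hγeq]
            exact sref_inner_self (sref β γ) β (ne_of_gt hββ)
          have hinner : ⟪R.fw α, γ⟫ =
              ⟪R.fw α, sref β γ⟫ - (2 * ⟪sref β γ, β⟫ / ⟪β, β⟫) * ⟪R.fw α, β⟫ := by
            conv_lhs => rw [hγeq]
            rw [show sref β (sref β γ)
                = sref β γ - (2 * ⟪sref β γ, β⟫ / ⟪β, β⟫) • β from rfl]
            rw [inner_sub_right, real_inner_smul_right]
          have hδδ := R.root_inner_self_ne hδΔ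
          by_cases hba : β = α
          · subst hba
            obtain ⟨m', hm'⟩ := R.crystallographic (sref β γ) hδΔ β hβΔ
            refine ⟨k' - m', ?_⟩
            rw [R.fw_spec β hα β hβ, if_pos rfl] at hinner
            have hstep : 2 * ⟪R.fw β, γ⟫ / ⟪γ, γ⟫ =
                2 * ⟪R.fw β, sref β γ⟫ / ⟪sref β γ, sref β γ⟫
                  - 2 * ⟪β, sref β γ⟫ / ⟪sref β γ, sref β γ⟫ := by
              rw [hinner, hnorm, real_inner_comm (sref β γ) β]
              field_simp
            rw [hstep, hk', hm']
            push_cast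
            ring
          · refine ⟨k', ?_⟩
            rw [R.fw_spec α hα β hβ, if_neg hba] at hinner
            rw [hinner, hnorm]
            rw [← hk']
            ring
  by_cases hp : γ ∈ R.posRoots
  · obtain ⟨k, hk⟩ := R.ht_int γ hγΔ0
    have hkpos : 0 < k := by
      have := R.ht_pos hp
      rw [hk] at this
      exact_mod_cast this
    refine key k.toNat γ hp ?_
    rw [hk]
    exact_mod_cast le_of_eq (by simp [Int.toNat_of_nonneg hkpos.le])
  · have hneg := R.neg_mem_posRoots hγΔ0 hp
    obtain ⟨k, hk⟩ := R.ht_int (-γ) (R.neg_mem hγΔ0)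
    have hkpos : 0 < k := by
      have := R.ht_pos hneg
      rw [hk] at this
      exact_mod_cast this
    obtain ⟨k', hk'⟩ := key k.toNat (-γ) hneg (by
      rw [hk]
      exact_mod_cast le_of_eq (by simp [Int.toNat_of_nonneg hkpos.le]))
    refine ⟨-k', ?_⟩
    rw [inner_neg_right, inner_neg_neg] at hk'
    push_cast
    rw [← hk']
    ring

end FwIntegrality

end RootSystemData

namespace RootSystemData

variable {V : Type*} [NormedAddCommGroup V] [InnerProductSpace ℝ V]

section HtLemmas

variable (R : RootSystemData V)

lemma ht_neg (x : V) : R.ht (-x) = -R.ht x := by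
  unfold ht
  rw [← Finset.sum_neg_distrib]
  exact Finset.sum_congr rfl fun β _ => R.coord_neg β x

lemma ht_sub (x y : V) : R.ht (x - y) = R.ht x - R.ht y := by
  unfold ht
  rw [← Finset.sum_sub_distrib]
  exact Finset.sum_congr rfl fun β _ => R.coord_sub β x y

end HtLemmas

/-- The `W`-equivariant operator `x ↦ ∑_{δ ∈ Δ} ⟨x, δ^∨⟩ δ`. -/
noncomputable def Aop (R : RootSystemData V) (x : V) : V :=
  ∑ δ ∈ R.Δ, (2 * ⟪x, δ⟫ / ⟪δ, δ⟫) • δ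

section AopSection

variable (R : RootSystemData V)

lemma Aop_add (x y : V) : R.Aop (x + y) = R.Aop x + R.Aop y := by
  unfold Aop
  rw [← Finset.sum_add_distrib]
  refine Finset.sum_congr rfl fun δ _ => ?_
  rw [inner_add_left, ← add_smul]
  congr 1
  ring

lemma Aop_smul (c : ℝ) (x : V) : R.Aop (c • x) = c • R.Aop x := by
  unfold Aop
  rw [Finset.smul_sum]
  refine Finset.sum_congr rfl fun δ _ => ?_
  rw [real_inner_smul_left, smul_smul]
  congr 1
  ring

lemma Aop_zero : R.Aop 0 = 0 := by
  unfold Aop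
  refine Finset.sum_eq_zero fun δ _ => ?_
  rw [inner_zero_left]
  norm_num

lemma inner_Aop (x y : V) : ⟪R.Aop x, y⟫ = ∑ δ ∈ R.Δ, (2 * ⟪x, δ⟫ / ⟪δ, δ⟫) * ⟪δ, y⟫ := by
  unfold Aop
  rw [sum_inner]
  exact Finset.sum_congr rfl fun δ _ => real_inner_smul_left _ _ _

lemma Aop_symm (x y : V) : ⟪R.Aop x, y⟫ = ⟪x, R.Aop y⟫ := by
  rw [inner_Aop, real_inner_comm (R.Aop y) x, inner_Aop]
  refine Finset.sum_congr rfl fun δ _ => ?_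
  rw [real_inner_comm δ y, real_inner_comm δ x]
  ring

lemma Aop_root_eigen {γ : V} (hγ : γ ∈ R.Δ) : ∃ c : ℝ, R.Aop γ = c • γ := by
  have hγγ := R.root_inner_self_pos hγ
  have hγγne := ne_of_gt hγγ
  set C : ℝ := ∑ δ ∈ R.Δ, (2 * ⟪γ, δ⟫ / ⟪δ, δ⟫) * (2 * ⟪δ, γ⟫ / ⟪γ, γ⟫) with hC
  have hre : R.Aop γ = ∑ δ ∈ R.Δ,
      (2 * ⟪γ, sref γ δ⟫ / ⟪sref γ δ, sref γ δ⟫) • (sref γ δ) := by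
    unfold Aop
    refine Finset.sum_nbij' (fun δ => sref γ δ) (fun δ => sref γ δ) ?_ ?_ ?_ ?_ ?_
    · intro δ hδ; exact R.sref_mem hγ hδ
    · intro δ hδ; exact R.sref_mem hγ hδ
    · intro δ _; exact sref_sref δ γ hγγne
    · intro δ _; exact sref_sref δ γ hγγne
    · intro δ _
      rw [sref_sref δ γ hγγne]
  have hterm : ∀ δ ∈ R.Δ,
      (2 * ⟪γ, sref γ δ⟫ / ⟪sref γ δ, sref γ δ⟫) • (sref γ δ)
        = -((2 * ⟪γ, δ⟫ / ⟪δ, δ⟫) • δ)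
          + ((2 * ⟪γ, δ⟫ / ⟪δ, δ⟫) * (2 * ⟪δ, γ⟫ / ⟪γ, γ⟫)) • γ := by
    intro δ hδ
    have h1 : ⟪γ, sref γ δ⟫ = -⟪γ, δ⟫ := by
      rw [inner_sref_right _ _ _ hγγne, sref_self γ hγγne, inner_neg_left]
    have h2 : ⟪sref γ δ, sref γ δ⟫ = ⟪δ, δ⟫ := sref_inner_self δ γ hγγne
    rw [h1, h2, show sref γ δ = δ - (2 * ⟪δ, γ⟫ / ⟪γ, γ⟫) • γ from rfl]
    rw [smul_sub, smul_smul]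
    have hcoef : 2 * -⟪γ, δ⟫ / ⟪δ, δ⟫ = -(2 * ⟪γ, δ⟫ / ⟪δ, δ⟫) := by ring
    rw [hcoef]
    module
  have hEq : R.Aop γ = -R.Aop γ + C • γ := by
    conv_lhs => rw [hre]
    rw [Finset.sum_congr rfl hterm, Finset.sum_add_distrib, ← Finset.sum_smul]
    congr 1
    rw [Finset.sum_neg_distrib]
    rfl
  refine ⟨C / 2, ?_⟩
  have h3 : R.Aop γ + R.Aop γ = C • γ := by
    nth_rewrite 2 [hEq]
    abel
  rw [← two_smul ℝ] at h3
  have h4 := congrArg (fun v => (2:ℝ)⁻¹ • v) h3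
  simp only [smul_smul] at h4
  rw [inv_mul_cancel₀ (two_ne_zero), one_smul] at h4
  rw [h4]
  congr 1
  ring

lemma Aop_eigen_all (hne : R.Δ.Nonempty) : ∃ c : ℝ, ∀ γ ∈ R.Δ, R.Aop γ = c • γ := by
  obtain ⟨γ₀, hγ₀⟩ := hne
  obtain ⟨c, hc⟩ := R.Aop_root_eigen hγ₀
  refine ⟨c, ?_⟩
  have hS : R.Δ.filter (fun γ => R.Aop γ = c • γ) = R.Δ := by
    apply R.irreducible (R.Δ.filter (fun γ => R.Aop γ = c • γ))
      (Finset.filter_subset _ _) ⟨γ₀, Finset.mem_filter.2 ⟨hγ₀, hc⟩⟩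
    intro γ hγ δ hδ hδn
    by_contra hnz
    obtain ⟨hγΔ, hγc⟩ := Finset.mem_filter.1 hγ
    obtain ⟨c', hc'⟩ := R.Aop_root_eigen hδ
    have hsym := R.Aop_symm γ δ
    rw [hγc, hc', real_inner_smul_left, real_inner_smul_right] at hsym
    have : c = c' := mul_right_cancel₀ hnz (by rw [hsym])
    exact hδn (Finset.mem_filter.2 ⟨hδ, by rw [hc', this]⟩)
  intro γ hγ
  have : γ ∈ R.Δ.filter (fun γ => R.Aop γ = c • γ) := by rw [hS]; exact hγ
  exact (Finset.mem_filter.1 this).2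

lemma Aop_all {c : ℝ} (h : ∀ γ ∈ R.Δ, R.Aop γ = c • γ) (x : V) : R.Aop x = c • x := by
  have hx : x ∈ Submodule.span ℝ (R.Δ : Set V) := by rw [R.span_eq_top]; trivial
  induction hx using Submodule.span_induction with
  | mem y hy => exact h y hy
  | zero => rw [R.Aop_zero, smul_zero]
  | add y z _ _ hy hz => rw [R.Aop_add, hy, hz, smul_add]
  | smul a y _ hy => rw [R.Aop_smul, hy, smul_smul, smul_smul, mul_comm]

end AopSection

section Eigenvalue

variable (R : RootSystemData V) {θ : V} (hθ : θ ∈ R.Δ)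
  (hθmax : ∀ γ ∈ R.Δ, ∀ β ∈ R.base, R.coord γ β ≤ R.coord θ β)

include hθ hθmax

lemma theta_sub_mem {δ : V} (hδ : δ ∈ R.posRoots) (hne : δ ≠ θ) (hnz : ⟪θ, δ⟫ ≠ 0) :
    θ - δ ∈ R.posRoots ∧ θ - δ ≠ θ ∧ ⟪θ, θ - δ⟫ ≠ 0 ∧
      ⟪θ - δ, θ - δ⟫ = ⟪δ, δ⟫ := by
  have hδΔ := R.posRoots_subset hδ
  have hθθ := R.root_inner_self_pos hθ
  have hkey : 2 * ⟪δ, θ⟫ = ⟪θ, θ⟫ :=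
    R.theta_npair_eq_one hθ hθmax hδ hne (by rwa [real_inner_comm])
  have hmemΔ : θ - δ ∈ R.Δ := by
    have h1 : ⟪-δ, θ⟫ < 0 := by
      rw [inner_neg_left]
      linarith
    have h2 : -δ ≠ -θ := fun h => hne (by
      have := congrArg Neg.neg h
      simpa using this)
    have := R.add_mem_of_inner_neg (R.neg_mem hδΔ) hθ h1 h2
    rwa [neg_add_eq_sub] at this
  have hmem : θ - δ ∈ R.posRoots := by
    by_contra hcon
    have hneg := R.neg_mem_posRoots hmemΔ hcon
    have : ∀ β ∈ R.base, R.coord δ β = R.coord θ β := by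
      intro β hβ
      have h1 := R.coord_nonneg hneg hβ
      rw [neg_sub, R.coord_sub] at h1
      have h2 := hθmax δ hδΔ β hβ
      linarith
    exact hne (by
      rw [R.root_decomp δ hδΔ, R.root_decomp θ hθ]
      exact Finset.sum_congr rfl fun β hβ => by rw [this β hβ])
  refine ⟨hmem, ?_, ?_, ?_⟩
  · intro h
    exact R.root_ne_zero δ hδΔ (sub_eq_self.mp h)
  · rw [inner_sub_right, real_inner_comm δ θ]
    intro h
    linarith
  · rw [inner_sub_left, inner_sub_right, inner_sub_right, real_inner_comm δ θ]
    linarith [hkey]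

end Eigenvalue

end RootSystemData

namespace RootSystemData

variable {V : Type*} [NormedAddCommGroup V] [InnerProductSpace ℝ V]

section EigenvalueComputation

variable (R : RootSystemData V) {θ : V} (hθ : θ ∈ R.Δ)
  (hθmax : ∀ γ ∈ R.Δ, ∀ β ∈ R.base, R.coord γ β ≤ R.coord θ β)

include hθ hθmax

lemma Aop_eigenvalue {c : ℝ} (hc : ∀ γ ∈ R.Δ, R.Aop γ = c • γ) :
    c = 2 * R.ht θ + 2 := by
  have hθp := R.theta_pos hθ hθmax
  have hhtθ := R.ht_pos hθp
  have hθθ := R.root_inner_self_pos hθ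
  set g : V → ℝ := fun δ => (2 * ⟪θ, δ⟫ / ⟪δ, δ⟫) * (2 * R.ht δ) with hg
  have E1 : ⟪R.Aop θ, R.Sv⟫ = c * (2 * R.ht θ) := by
    rw [hc θ hθ, real_inner_smul_left, R.inner_Sv_ht]
  have E2 : ⟪R.Aop θ, R.Sv⟫ = ∑ δ ∈ R.Δ, g δ := by
    rw [R.inner_Aop]
    exact Finset.sum_congr rfl fun δ _ => by rw [R.inner_Sv_ht]
  have heven : ∀ δ ∈ R.Δ, g (-δ) = g δ := by
    intro δ _
    simp only [hg]
    rw [inner_neg_right, inner_neg_neg, R.ht_neg]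
    ring
  have E3 : ∑ δ ∈ R.Δ, g δ = 2 * ∑ δ ∈ R.posRoots, g δ := R.sum_roots_eq_twice g heven
  have E4 : ∑ δ ∈ R.posRoots, g δ = g θ + ∑ δ ∈ R.posRoots.erase θ, g δ :=
    (Finset.add_sum_erase _ g hθp).symm
  set P := (R.posRoots.erase θ).filter (fun δ => ⟪θ, δ⟫ ≠ 0) with hP
  have E5 : ∑ δ ∈ R.posRoots.erase θ, g δ = ∑ δ ∈ P, g δ := by
    rw [hP]
    refine (Finset.sum_filter_of_ne (fun δ hδ hgne => ?_)).symm
    intro h0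
    apply hgne
    simp only [hg]
    rw [h0]
    ring
  have hPmem : ∀ δ ∈ P, δ ∈ R.posRoots ∧ δ ≠ θ ∧ ⟪θ, δ⟫ ≠ 0 := fun δ hδ => by
    obtain ⟨h1, h2⟩ := Finset.mem_filter.1 hδ
    exact ⟨(Finset.mem_erase.1 h1).2, (Finset.mem_erase.1 h1).1, h2⟩
  have hφ : ∀ δ ∈ P, θ - δ ∈ P := by
    intro δ hδ
    obtain ⟨h1, h2, h3⟩ := hPmem δ hδ
    obtain ⟨m1, m2, m3, _⟩ := R.theta_sub_mem hθ hθmax h1 h2 h3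
    exact Finset.mem_filter.2 ⟨Finset.mem_erase.2 ⟨m2, m1⟩, m3⟩
  have hpair : ∀ δ ∈ P, g δ + g (θ - δ) = (2 * ⟪θ, δ⟫ / ⟪δ, δ⟫) * (2 * R.ht θ) := by
    intro δ hδ
    obtain ⟨h1, h2, h3⟩ := hPmem δ hδ
    obtain ⟨_, _, _, hnorm⟩ := R.theta_sub_mem hθ hθmax h1 h2 h3
    have hkey : 2 * ⟪δ, θ⟫ = ⟪θ, θ⟫ :=
      R.theta_npair_eq_one hθ hθmax h1 h2 (by rwa [real_inner_comm])
    have hcomm : ⟪θ, δ⟫ = ⟪δ, θ⟫ := real_inner_comm δ θ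
    have hcoef : 2 * ⟪θ, θ - δ⟫ / ⟪θ - δ, θ - δ⟫ = 2 * ⟪θ, δ⟫ / ⟪δ, δ⟫ := by
      rw [hnorm, inner_sub_right]
      congr 1
      linarith
    simp only [hg]
    rw [hcoef, R.ht_sub]
    ring
  have hsumφ : ∑ δ ∈ P, g (θ - δ) = ∑ δ ∈ P, g δ := by
    refine Finset.sum_nbij' (fun δ => θ - δ) (fun δ => θ - δ) ?_ ?_ ?_ ?_ ?_
    · exact hφ
    · exact hφ
    · intro δ _; module
    · intro δ _; module
    · intro δ _; rfl
  have E6 : 2 * ∑ δ ∈ P, g δ = (∑ δ ∈ P, 2 * ⟪θ, δ⟫ / ⟪δ, δ⟫) * (2 * R.ht θ) := by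
    calc 2 * ∑ δ ∈ P, g δ = ∑ δ ∈ P, g δ + ∑ δ ∈ P, g (θ - δ) := by rw [hsumφ]; ring
    _ = ∑ δ ∈ P, (g δ + g (θ - δ)) := (Finset.sum_add_distrib).symm
    _ = ∑ δ ∈ P, (2 * ⟪θ, δ⟫ / ⟪δ, δ⟫) * (2 * R.ht θ) := Finset.sum_congr rfl hpair
    _ = (∑ δ ∈ P, 2 * ⟪θ, δ⟫ / ⟪δ, δ⟫) * (2 * R.ht θ) := (Finset.sum_mul _ _ _).symm
  have E7 : ∑ δ ∈ P, 2 * ⟪θ, δ⟫ / ⟪δ, δ⟫ = 2 * R.ht θ - 2 := by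
    have h1 : ⟪θ, R.Sv⟫ = ∑ δ ∈ R.posRoots, 2 * ⟪θ, δ⟫ / ⟪δ, δ⟫ := by
      unfold Sv
      rw [inner_sum]
      exact Finset.sum_congr rfl fun δ _ => by rw [real_inner_smul_right]; ring
    have h2 : ∑ δ ∈ R.posRoots, 2 * ⟪θ, δ⟫ / ⟪δ, δ⟫ = 2 * R.ht θ := by
      rw [← h1, R.inner_Sv_ht]
    have h3 : ∑ δ ∈ R.posRoots, 2 * ⟪θ, δ⟫ / ⟪δ, δ⟫
        = 2 * ⟪θ, θ⟫ / ⟪θ, θ⟫ + ∑ δ ∈ R.posRoots.erase θ, 2 * ⟪θ, δ⟫ / ⟪δ, δ⟫ :=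
      (Finset.add_sum_erase _ _ hθp).symm
    have h4 : ∑ δ ∈ R.posRoots.erase θ, 2 * ⟪θ, δ⟫ / ⟪δ, δ⟫
        = ∑ δ ∈ P, 2 * ⟪θ, δ⟫ / ⟪δ, δ⟫ := by
      rw [hP]
      refine (Finset.sum_filter_of_ne (fun δ hδ hne => ?_)).symm
      intro h0
      apply hne
      rw [h0]
      ring
    have h5 : 2 * ⟪θ, θ⟫ / ⟪θ, θ⟫ = 2 := by
      field_simp
    linarith [h2, h3, h4]
  have hgθ : g θ = 2 * (2 * R.ht θ) := by
    simp only [hg]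
    rw [show 2 * ⟪θ, θ⟫ / ⟪θ, θ⟫ = 2 by field_simp]
  have hfinal : c * (2 * R.ht θ) = (2 * R.ht θ + 2) * (2 * R.ht θ) := by
    have h0 : c * (2 * R.ht θ) = 2 * (g θ + ∑ δ ∈ P, g δ) := by
      rw [← E1, E2, E3, E4, E5]
    rw [h0]
    nlinarith [E6, E7, hgθ]
  exact mul_right_cancel₀ (by positivity) hfinal

end EigenvalueComputation

end RootSystemData

namespace RootSystemData

variable {V : Type*} [NormedAddCommGroup V] [InnerProductSpace ℝ V]

section Main12

variable (R : RootSystemData V) {α : V} (hα : α ∈ R.base)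

include hα

lemma fw_self_inner_pos : 0 < ⟪R.fw α, R.fw α⟫ := by
  have h1 : ⟪R.fw α, α⟫ = ⟪α, α⟫ / 2 := by rw [R.fw_spec α hα α hα, if_pos rfl]
  have hαα := R.root_inner_self_pos (R.base_sub hα)
  have hne : R.fw α ≠ 0 := by
    intro h
    rw [h, inner_zero_left] at h1
    linarith
  exact lt_of_le_of_ne real_inner_self_nonneg
    (Ne.symm fun h => hne (inner_self_eq_zero.mp h))

lemma Rset_eq : R.Rset α = R.posRoots.filter (fun γ => ⟪γ, R.fw α⟫ ≠ 0) := by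
  ext γ
  simp only [Rset, Finset.mem_filter]
  constructor
  · rintro ⟨hΔ, hpos⟩
    have hαα := R.root_inner_self_pos (R.base_sub hα)
    have hi := R.inner_root_base hΔ hα
    have hc : 0 < R.coord γ α := by nlinarith
    exact ⟨R.pos_of_coord_pos hΔ hα hc, ne_of_gt hpos⟩
  · rintro ⟨hp, hne⟩
    refine ⟨R.posRoots_subset hp, ?_⟩
    have h0 : 0 ≤ ⟪γ, R.fw α⟫ := by
      rw [real_inner_comm]
      exact R.fw_inner_pos_nonneg hα hp
    exact lt_of_le_of_ne h0 (Ne.symm hne)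

variable {θ : V} (hθ : θ ∈ R.Δ)
  (hθmax : ∀ γ ∈ R.Δ, ∀ β ∈ R.base, R.coord γ β ≤ R.coord θ β)

include hθ hθmax

lemma main_upper (q : ℕ) (hq : (∑ γ ∈ R.Rset α, γ) = (q : ℝ) • R.fw α) :
    (q : ℝ) ≤ R.ht θ + 1 ∧
    ((q : ℝ) = R.ht θ + 1 ↔ ∀ γ ∈ R.posRoots, 2 * ⟪R.fw α, γ⟫ / ⟪γ, γ⟫ ≤ 1) := by
  obtain ⟨c, hc⟩ := R.Aop_eigen_all ⟨θ, hθ⟩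
  have hcval : c = 2 * R.ht θ + 2 := R.Aop_eigenvalue hθ hθmax hc
  have hAfw : R.Aop (R.fw α) = c • R.fw α := R.Aop_all hc _
  have hW := R.fw_self_inner_pos hα
  have hRset := R.Rset_eq hα
  set w := R.fw α with hw
  have I1 : ⟪R.Aop w, w⟫ = c * ⟪w, w⟫ := by rw [hAfw, real_inner_smul_left]
  set F : V → ℝ := fun δ => (2 * ⟪w, δ⟫ / ⟪δ, δ⟫) * ⟪δ, w⟫ with hF
  have I2a : ⟪R.Aop w, w⟫ = ∑ δ ∈ R.Δ, F δ := R.inner_Aop w w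
  have heven : ∀ δ ∈ R.Δ, F (-δ) = F δ := by
    intro δ _
    simp only [hF, inner_neg_right, inner_neg_left, inner_neg_neg]
    ring
  have I2b : ∑ δ ∈ R.Δ, F δ = 2 * ∑ δ ∈ R.posRoots, F δ := R.sum_roots_eq_twice F heven
  have I2c : ∑ δ ∈ R.posRoots, F δ = ∑ δ ∈ R.Rset α, F δ := by
    rw [hRset]
    refine (Finset.sum_filter_of_ne (fun δ hδ hne => ?_)).symm
    intro h0
    apply hne
    simp only [hF]
    rw [h0]
    ring
  have I3 : ∑ δ ∈ R.Rset α, ⟪δ, w⟫ = q * ⟪w, w⟫ := by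
    have h := congrArg (fun v => ⟪v, w⟫) hq
    simpa [sum_inner, real_inner_smul_left] using h
  have hkey : ∀ δ ∈ R.Rset α, 1 ≤ 2 * ⟪w, δ⟫ / ⟪δ, δ⟫ ∧ 0 < ⟪δ, w⟫ := by
    intro δ hδ
    rw [hRset] at hδ
    obtain ⟨h1, h2⟩ := Finset.mem_filter.1 hδ
    have hδΔ := R.posRoots_subset h1
    have hpos : 0 < ⟪δ, w⟫ := lt_of_le_of_ne (by
      rw [real_inner_comm]
      exact R.fw_inner_pos_nonneg hα h1) (Ne.symm h2)
    obtain ⟨k, hk⟩ := R.fw_npair_int hα hδΔ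
    have hδδ := R.root_inner_self_pos hδΔ
    have h3 : 0 < 2 * ⟪w, δ⟫ / ⟪δ, δ⟫ := by
      apply div_pos _ hδδ
      rw [real_inner_comm]
      linarith
    refine ⟨?_, hpos⟩
    have hk1 : 1 ≤ k := by
      have : (0:ℝ) < k := by rw [← hk]; exact h3
      exact_mod_cast this
    rw [hk]
    exact_mod_cast hk1
  have hdiff : c * ⟪w, w⟫ - 2 * q * ⟪w, w⟫ = 2 * ∑ δ ∈ R.Rset α, (F δ - ⟪δ, w⟫) := by
    have hA : c * ⟪w, w⟫ = 2 * ∑ δ ∈ R.Rset α, F δ := by rw [← I1, I2a, I2b, I2c]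
    rw [Finset.sum_sub_distrib, mul_sub, ← hA, I3]
    ring
  have hterm : ∀ δ ∈ R.Rset α, 0 ≤ F δ - ⟪δ, w⟫ := by
    intro δ hδ
    obtain ⟨h1, h2⟩ := hkey δ hδ
    simp only [hF]
    nlinarith
  have hsum_nonneg : 0 ≤ ∑ δ ∈ R.Rset α, (F δ - ⟪δ, w⟫) := Finset.sum_nonneg hterm
  constructor
  · have h2q : 2 * (q:ℝ) * ⟪w, w⟫ ≤ c * ⟪w, w⟫ := by linarith
    have : 2 * (q:ℝ) ≤ c := le_of_mul_le_mul_right (by linarith [h2q]) hW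
    rw [hcval] at this
    linarith
  · constructor
    · intro hqe γ hγ
      have hc2q : c = 2 * q := by rw [hcval, hqe]; ring
      have hD : ∑ δ ∈ R.Rset α, (F δ - ⟪δ, w⟫) = 0 := by
        rw [hc2q] at hdiff
        linarith
      have hzero := (Finset.sum_eq_zero_iff_of_nonneg hterm).1 hD
      by_cases hmem : γ ∈ R.Rset α
      · have h0 := hzero γ hmem
        obtain ⟨h1, h2⟩ := hkey γ hmem
        simp only [hF] at h0
        have h3 : (2 * ⟪w, γ⟫ / ⟪γ, γ⟫ - 1) * ⟪γ, w⟫ = 0 := by linear_combination h0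
        rcases mul_eq_zero.mp h3 with h | h
        · linarith
        · exact absurd h (ne_of_gt h2)
      · have h0 : ⟪γ, w⟫ = 0 := by
          by_contra hne
          rw [hRset] at hmem
          exact hmem (Finset.mem_filter.2 ⟨hγ, hne⟩)
        rw [real_inner_comm γ w, h0]
        norm_num
    · intro hmin
      have hD : ∑ δ ∈ R.Rset α, (F δ - ⟪δ, w⟫) = 0 := Finset.sum_eq_zero fun δ hδ => by
        obtain ⟨h1, h2⟩ := hkey δ hδ
        have hδpos : δ ∈ R.posRoots := by
          rw [hRset] at hδ
          exact (Finset.mem_filter.1 hδ).1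
        have h3 := hmin δ hδpos
        have h4 : 2 * ⟪w, δ⟫ / ⟪δ, δ⟫ = 1 := le_antisymm h3 h1
        simp only [hF]
        rw [h4]
        ring
      have h5 : c * ⟪w, w⟫ = 2 * q * ⟪w, w⟫ := by
        rw [hD] at hdiff
        linarith
      have h6 : c = 2 * q := by
        have := mul_right_cancel₀ (ne_of_gt hW) h5
        exact this
      rw [hcval] at h6
      linarith

end Main12

section QSplit

variable (R : RootSystemData V) {α : V} (hα : α ∈ R.base)

include hα

lemma q_split (q : ℕ) (hq : (∑ γ ∈ R.Rset α, γ) = (q : ℝ) • R.fw α) :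
    (q : ℝ) + ∑ γ ∈ R.posRoots.filter (fun γ => R.coord γ α = 0), 2 * ⟪γ, α⟫ / ⟪α, α⟫
      = 2 := by
  have hαΔ := R.base_sub hα
  have hαα := R.root_inner_self_pos hαΔ
  have I3 : ∑ δ ∈ R.Rset α, ⟪δ, α⟫ = q * (⟪α, α⟫ / 2) := by
    have h := congrArg (fun v => ⟪v, α⟫) hq
    simp only [sum_inner, real_inner_smul_left] at h
    rw [h, R.fw_spec α hα α hα, if_pos rfl]
  have I4 : ∑ δ ∈ R.Rset α, 2 * ⟪δ, α⟫ / ⟪α, α⟫ = q := by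
    have h1 : ∑ δ ∈ R.Rset α, 2 * ⟪δ, α⟫ / ⟪α, α⟫
        = (2 / ⟪α, α⟫) * ∑ δ ∈ R.Rset α, ⟪δ, α⟫ := by
      rw [Finset.mul_sum]
      exact Finset.sum_congr rfl fun δ _ => by ring
    rw [h1, I3]
    field_simp
  have I5 : ∑ γ ∈ R.posRoots, 2 * ⟪γ, α⟫ / ⟪α, α⟫ = 2 := R.sum_pos_npair_right hα
  have hfeq : R.posRoots.filter (fun γ => ¬ ⟪γ, R.fw α⟫ ≠ 0)
      = R.posRoots.filter (fun γ => R.coord γ α = 0) := by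
    apply Finset.filter_congr
    intro γ hγ
    have hγΔ := R.posRoots_subset hγ
    have hi := R.inner_root_base hγΔ hα
    constructor
    · intro h
      rw [not_not] at h
      rw [hi] at h
      rcases mul_eq_zero.mp h with h | h
      · exact h
      · exfalso
        have : ⟪α, α⟫ / 2 ≠ 0 := by positivity
        exact this h
    · intro h
      rw [not_not, hi, h]
      ring
  have hsplit := Finset.sum_filter_add_sum_filter_not R.posRoots
    (fun γ => ⟪γ, R.fw α⟫ ≠ 0) (fun γ => 2 * ⟪γ, α⟫ / ⟪α, α⟫)
  rw [hfeq] at hsplit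
  have hfirst : R.posRoots.filter (fun γ => ⟪γ, R.fw α⟫ ≠ 0) = R.Rset α :=
    (R.Rset_eq hα).symm
  rw [hfirst, I4] at hsplit
  linarith [hsplit, I5]

end QSplit

end RootSystemData

namespace RootSystemData

variable {V : Type*} [NormedAddCommGroup V] [InnerProductSpace ℝ V]

section Signs

variable (R : RootSystemData V)

lemma simples_inner_nonpos {β β' : V} (hβ : β ∈ R.base) (hβ' : β' ∈ R.base)
    (hne : β ≠ β') : ⟪β, β'⟫ ≤ 0 := by
  by_contra h
  push_neg at h
  have h1 : ⟪β, -β'⟫ < 0 := by rw [inner_neg_right]; linarith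
  have h2 : β ≠ -(-β') := by simpa using hne
  have hmem : β - β' ∈ R.Δ := by
    have := R.add_mem_of_inner_neg (R.base_sub hβ) (R.neg_mem (R.base_sub hβ')) h1 h2
    rwa [← sub_eq_add_neg] at this
  rcases R.pos_or_neg _ hmem with hp | hn
  · have h3 := hp β' hβ'
    rw [R.coord_sub, R.coord_simple hβ hβ', R.coord_simple hβ' hβ'] at h3
    simp [hne] at h3
    linarith
  · have h3 := hn β hβ
    rw [R.coord_sub, R.coord_simple hβ hβ, R.coord_simple hβ' hβ] at h3
    simp [Ne.symm hne] at h3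
    linarith

lemma level0_inner_nonpos {α γ : V} (hα : α ∈ R.base) (hγ : γ ∈ R.posRoots)
    (hc0 : R.coord γ α = 0) : ⟪γ, α⟫ ≤ 0 := by
  by_contra h
  push_neg at h
  have hγΔ := R.posRoots_subset hγ
  have hne : γ ≠ -(-α) := by
    simp only [neg_neg]
    intro heq
    rw [heq, R.coord_simple hα hα] at hc0
    simp at hc0
  have hmem : γ - α ∈ R.Δ := by
    have h1 : ⟪γ, -α⟫ < 0 := by rw [inner_neg_right]; linarith
    have := R.add_mem_of_inner_neg hγΔ (R.neg_mem (R.base_sub hα)) h1 hne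
    rwa [← sub_eq_add_neg] at this
  obtain ⟨β₀, hβ₀, hβ₀pos⟩ := R.exists_coord_pos hγ
  have hβ₀ne : β₀ ≠ α := fun hh => by rw [hh, hc0] at hβ₀pos; exact lt_irrefl _ hβ₀pos
  rcases R.pos_or_neg _ hmem with hp | hn
  · have h3 := hp α hα
    rw [R.coord_sub, hc0, R.coord_simple hα hα] at h3
    simp at h3
    linarith
  · have h3 := hn β₀ hβ₀
    rw [R.coord_sub, R.coord_simple hα hβ₀, if_neg (Ne.symm hβ₀ne)] at h3
    linarith

end Signs

section SupportDichotomy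

variable (R : RootSystemData V)

/-- If a subset of the base is "closed" (orthogonal to its complement),
then a positive root with some support inside it has inner product `> 0`
with one of its simple roots inside it. -/
lemma exists_pos_inner_support (P : V → Prop)
    (hclosed : ∀ β ∈ R.base, P β → ∀ β' ∈ R.base, ¬ P β' → ⟪β, β'⟫ = 0)
    {γ : V} (hγ : γ ∈ R.posRoots)
    (hex : ∃ β ∈ R.base, P β ∧ R.coord γ β ≠ 0) :
    ∃ β ∈ R.base, P β ∧ 0 < R.coord γ β ∧ 0 < ⟪γ, β⟫ := by
  classical
  have hγΔ := R.posRoots_subset hγ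
  set S₁ := R.base.filter P with hS₁
  set a : V := ∑ β ∈ S₁, R.coord γ β • β with ha
  obtain ⟨β₁, hβ₁, hβ₁P, hβ₁ne⟩ := hex
  -- the coordinate of `a` on β₁ is `coord γ β₁`
  have hcoord_a : ∀ χ ∈ R.base, R.coord a χ = if P χ then R.coord γ χ else 0 := by
    intro χ hχ
    rw [ha, R.coord_sum]
    by_cases hPχ : P χ
    · rw [if_pos hPχ]
      rw [Finset.sum_eq_single χ]
      · rw [R.coord_smul, R.coord_simple hχ hχ, if_pos rfl, mul_one]
      · intro β hβ hneβ
        have hβbase : β ∈ R.base := (Finset.mem_filter.1 hβ).1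
        rw [R.coord_smul, R.coord_simple hβbase hχ, if_neg hneβ, mul_zero]
      · intro hχn
        exact absurd (Finset.mem_filter.2 ⟨hχ, hPχ⟩) hχn
    · rw [if_neg hPχ]
      refine Finset.sum_eq_zero fun β hβ => ?_
      obtain ⟨hβbase, hβP⟩ := Finset.mem_filter.1 hβ
      have : β ≠ χ := fun hh => hPχ (hh ▸ hβP)
      rw [R.coord_smul, R.coord_simple hβbase hχ, if_neg this, mul_zero]
  have hane : a ≠ 0 := by
    intro h0
    have := hcoord_a β₁ hβ₁
    rw [h0, R.coord_zero, if_pos hβ₁P] at this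
    exact hβ₁ne this.symm
  -- γ = a + b with ⟪b, a⟫ = 0
  set b : V := ∑ β ∈ R.base.filter (fun β => ¬ P β), R.coord γ β • β with hb
  have hγab : γ = a + b := by
    rw [ha, hb]
    rw [Finset.sum_filter_add_sum_filter_not R.base P (fun β => R.coord γ β • β)]
    exact R.root_decomp γ hγΔ
  have hba : ⟪b, a⟫ = 0 := by
    rw [hb, sum_inner]
    refine Finset.sum_eq_zero fun β' hβ' => ?_
    obtain ⟨hβ'base, hβ'P⟩ := Finset.mem_filter.1 hβ'
    rw [real_inner_smul_left, ha, inner_sum]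
    rw [Finset.sum_eq_zero, mul_zero]
    intro β hβ
    obtain ⟨hβbase, hβP⟩ := Finset.mem_filter.1 hβ
    rw [real_inner_smul_right]
    rw [real_inner_comm β β', hclosed β hβbase hβP β' hβ'base hβ'P, mul_zero]
  have haa : 0 < ⟪a, a⟫ := by
    have h1 : ⟪a, a⟫ ≠ 0 := fun h => hane (inner_self_eq_zero.mp h)
    exact lt_of_le_of_ne real_inner_self_nonneg (Ne.symm h1)
  have hγa : ⟪γ, a⟫ = ⟪a, a⟫ := by
    rw [hγab, inner_add_left, hba, add_zero]
  have hsum : ∑ β ∈ S₁, R.coord γ β * ⟪γ, β⟫ = ⟪a, a⟫ := by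
    rw [← hγa, ha, inner_sum]
    exact Finset.sum_congr rfl fun β _ => by rw [real_inner_smul_right]
  obtain ⟨β, hβ, hβne0⟩ : ∃ β ∈ S₁, 0 < R.coord γ β * ⟪γ, β⟫ := by
    by_contra hcon
    push_neg at hcon
    have : ∑ β ∈ S₁, R.coord γ β * ⟪γ, β⟫ ≤ 0 := Finset.sum_nonpos hcon
    rw [hsum] at this
    linarith
  obtain ⟨hβbase, hβP⟩ := Finset.mem_filter.1 hβ
  have hcnn := R.coord_nonneg hγ hβbase
  refine ⟨β, hβbase, hβP, ?_, ?_⟩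
  · rcases lt_or_eq_of_le hcnn with h | h
    · exact h
    · exfalso; rw [← h] at hβne0; linarith
  · nlinarith

/-- Support dichotomy: a positive root is supported entirely inside a closed
subset of the base or entirely outside of it. -/
lemma support_dichotomy (Rc : Finset V)
    (hclosed : ∀ β ∈ Rc, ∀ β' ∈ R.base, β' ∉ Rc → ⟪β, β'⟫ = 0)
    (hRcsub : Rc ⊆ R.base) :
    ∀ γ ∈ R.posRoots, (∀ β ∈ R.base, R.coord γ β ≠ 0 → β ∈ Rc) ∨
      (∀ β ∈ R.base, R.coord γ β ≠ 0 → β ∉ Rc) := by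
  classical
  have hcl1 : ∀ β ∈ R.base, β ∈ Rc → ∀ β' ∈ R.base, ¬ β' ∈ Rc → ⟪β, β'⟫ = 0 :=
    fun β _ hβ β' hβ' hβ'n => hclosed β hβ β' hβ' hβ'n
  have hcl2 : ∀ β ∈ R.base, β ∉ Rc → ∀ β' ∈ R.base, ¬ β' ∉ Rc → ⟪β, β'⟫ = 0 := by
    intro β hβ hβn β' hβ' hβ'n
    rw [not_not] at hβ'n
    rw [real_inner_comm]
    exact hclosed β' hβ'n β hβ hβn
  suffices key : ∀ m : ℕ, ∀ γ ∈ R.posRoots, R.ht γ ≤ m →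
      (∀ β ∈ R.base, R.coord γ β ≠ 0 → β ∈ Rc) ∨
      (∀ β ∈ R.base, R.coord γ β ≠ 0 → β ∉ Rc) by
    intro γ hγ
    obtain ⟨k, hk⟩ := R.ht_int γ (R.posRoots_subset hγ)
    have hkpos : 0 < k := by
      have := R.ht_pos hγ
      rw [hk] at this
      exact_mod_cast this
    exact key k.toNat γ hγ (by
      rw [hk]
      exact_mod_cast le_of_eq (by simp [Int.toNat_of_nonneg hkpos.le]))
  intro m
  induction m with
  | zero =>
      intro γ hγ hht
      exact absurd hht (not_le.2 (by simpa using R.ht_pos hγ))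
  | succ m ih =>
      intro γ hγp hht
      have hγΔ := R.posRoots_subset hγp
      by_cases hA : ∃ β ∈ R.base, β ∈ Rc ∧ R.coord γ β ≠ 0
      case neg =>
        right
        intro β hβ hne hmem
        exact hA ⟨β, hβ, hmem, hne⟩
      by_cases hB : ∃ β ∈ R.base, β ∉ Rc ∧ R.coord γ β ≠ 0
      case neg =>
        left
        intro β hβ hne
        by_contra hmem
        exact hB ⟨β, hβ, hmem, hne⟩
      exfalso
      obtain ⟨β₁, hβ₁, hβ₁Rc, hβ₁c, hβ₁i⟩ :=
        R.exists_pos_inner_support (fun β => β ∈ Rc) hcl1 hγp hA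
      obtain ⟨β₂, hβ₂, hβ₂Rc, hβ₂c, hβ₂i⟩ :=
        R.exists_pos_inner_support (fun β => β ∉ Rc) hcl2 hγp hB
      have hβ₁₂ : β₁ ≠ β₂ := fun h => hβ₂Rc (h ▸ hβ₁Rc)
      -- reflecting helper
      have reflect : ∀ β₀ ∈ R.base, 0 < R.coord γ β₀ → 0 < ⟪γ, β₀⟫ → γ ≠ β₀ →
          sref β₀ γ ∈ R.posRoots ∧ R.ht (sref β₀ γ) ≤ m ∧
          (∀ χ ∈ R.base, χ ≠ β₀ → R.coord (sref β₀ γ) χ = R.coord γ χ) := by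
        intro β₀ hβ₀ hc hi hne
        obtain ⟨hp, _⟩ := R.sref_simple_mem_pos hβ₀ hγp hne
        have hβ₀Δ := R.base_sub hβ₀
        have hββ := R.root_inner_self_pos hβ₀Δ
        obtain ⟨k, hk⟩ := R.crystallographic β₀ hβ₀Δ γ hγΔ
        have hk1 : 1 ≤ k := by
          have : (0:ℝ) < k := by
            rw [← hk]
            exact div_pos (by linarith) hββ
          exact_mod_cast this
        have hhtδ : R.ht (sref β₀ γ) = R.ht γ - k := by
          unfold ht
          rw [Finset.sum_congr rfl (fun χ hχ => R.coord_sref β₀ γ χ :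
            ∀ χ ∈ R.base, R.coord (sref β₀ γ) χ
              = R.coord γ χ - (2 * ⟪γ, β₀⟫ / ⟪β₀, β₀⟫) * R.coord β₀ χ)]
          rw [Finset.sum_sub_distrib, ← Finset.mul_sum]
          have h1 : ∑ χ ∈ R.base, R.coord β₀ χ = 1 := R.ht_simple hβ₀
          rw [h1, hk]
          ring
        refine ⟨hp, ?_, ?_⟩
        · rw [hhtδ]
          push_cast at hht ⊢
          have : (1:ℝ) ≤ k := by exact_mod_cast hk1
          linarith
        · intro χ hχ hχne
          rw [R.coord_sref, R.coord_simple hβ₀ hχ, if_neg (Ne.symm hχne), mul_zero, sub_zero]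
      -- γ is not a simple root (it has support at β₁ and β₂)
      have hγne1 : γ ≠ β₁ := by
        intro h
        rw [h, R.coord_simple hβ₁ hβ₂, if_neg hβ₁₂] at hβ₂c
        exact lt_irrefl _ hβ₂c
      have hγne2 : γ ≠ β₂ := by
        intro h
        rw [h, R.coord_simple hβ₂ hβ₁, if_neg (Ne.symm hβ₁₂)] at hβ₁c
        exact lt_irrefl _ hβ₁c
      obtain ⟨hδ₁p, hδ₁ht, hδ₁c⟩ := reflect β₁ hβ₁ hβ₁c hβ₁i hγne1
      obtain ⟨hδ₂p, hδ₂ht, hδ₂c⟩ := reflect β₂ hβ₂ hβ₂c hβ₂i hγne2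
      -- apply IH to both reflections
      have hAone : ∀ β ∈ R.base, β ∈ Rc → R.coord γ β ≠ 0 → β = β₁ := by
        rcases ih (sref β₁ γ) hδ₁p hδ₁ht with h | h
        · exfalso
          have := h β₂ hβ₂ (by rw [hδ₁c β₂ hβ₂ (Ne.symm hβ₁₂)]; exact ne_of_gt hβ₂c)
          exact hβ₂Rc this
        · intro β hβ hβRc hβc
          by_contra hne
          exact h β hβ (by rw [hδ₁c β hβ hne]; exact hβc) hβRc
      have hBone : ∀ β ∈ R.base, β ∉ Rc → R.coord γ β ≠ 0 → β = β₂ := by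
        rcases ih (sref β₂ γ) hδ₂p hδ₂ht with h | h
        · intro β hβ hβRc hβc
          by_contra hne
          exact hβRc (h β hβ (by rw [hδ₂c β hβ hne]; exact hβc))
        · exfalso
          have := h β₁ hβ₁ (by rw [hδ₂c β₁ hβ₁ hβ₁₂]; exact ne_of_gt hβ₁c)
          exact this hβ₁Rc
      -- hence γ = p • β₁ + p' • β₂
      have hsupp : ∀ β ∈ R.base, R.coord γ β ≠ 0 → β = β₁ ∨ β = β₂ := by
        intro β hβ hβc
        by_cases h : β ∈ Rc
        · exact Or.inl (hAone β hβ h hβc)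
        · exact Or.inr (hBone β hβ h hβc)
      have hγeq : γ = R.coord γ β₁ • β₁ + R.coord γ β₂ • β₂ := by
        have hpair_sub : ({β₁, β₂} : Finset V) ⊆ R.base := by
          intro x hx
          rcases Finset.mem_insert.1 hx with h | h
          · exact h ▸ hβ₁
          · exact (Finset.mem_singleton.1 h) ▸ hβ₂
        have hzero : ∀ x ∈ R.base, x ∉ ({β₁, β₂} : Finset V) → R.coord γ x • x = 0 := by
          intro x hx hxn
          by_cases hc : R.coord γ x = 0
          · rw [hc, zero_smul]
          · exfalso
            rcases hsupp x hx hc with h | h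
            · exact hxn (by rw [h]; exact Finset.mem_insert_self _ _)
            · exact hxn (by rw [h]; exact Finset.mem_insert_of_mem (Finset.mem_singleton_self _))
        have hss := Finset.sum_subset hpair_sub hzero
        conv_lhs => rw [R.root_decomp γ hγΔ]
        rw [← hss, Finset.sum_pair hβ₁₂]
      -- orthogonality of β₁ and β₂
      have hortho : ⟪β₁, β₂⟫ = 0 := hclosed β₁ hβ₁Rc β₂ hβ₂ hβ₂Rc
      -- inner product of γ with β₁
      have hip : ⟪γ, β₁⟫ = R.coord γ β₁ * ⟪β₁, β₁⟫ := by
        conv_lhs => rw [hγeq]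
        have hortho' : ⟪β₂, β₁⟫ = 0 := by rw [real_inner_comm]; exact hortho
        rw [inner_add_left, real_inner_smul_left, real_inner_smul_left, hortho']
        ring
      -- the reflection sref β₁ γ has negative coordinate at β₁
      have hneg : R.coord (sref β₁ γ) β₁ = -R.coord γ β₁ := by
        rw [R.coord_sref, R.coord_simple hβ₁ hβ₁, if_pos rfl, mul_one, hip]
        have hββ := R.root_inner_self_ne (R.base_sub hβ₁)
        field_simp
        ring
      have := R.coord_nonneg hδ₁p hβ₁
      rw [hneg] at this
      linarith

end SupportDichotomy

end RootSystemData

namespace RootSystemData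

variable {V : Type*} [NormedAddCommGroup V] [InnerProductSpace ℝ V]

/-- The Dynkin-diagram graph on the base. -/
noncomputable def baseGraph (R : RootSystemData V) : SimpleGraph {x : V // x ∈ R.base} where
  Adj a b := a ≠ b ∧ ⟪(a : V), (b : V)⟫ ≠ 0
  symm := by
    constructor
    rintro a b ⟨h1, h2⟩
    exact ⟨h1.symm, by rwa [real_inner_comm]⟩
  loopless := ⟨fun a h => h.1 rfl⟩

section Graph

variable (R : RootSystemData V) {α : V} (hα : α ∈ R.base)

include hα

lemma base_reachable : ∀ b : {x : V // x ∈ R.base},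
    R.baseGraph.Reachable ⟨α, hα⟩ b := by
  classical
  set a : {x : V // x ∈ R.base} := ⟨α, hα⟩ with haa
  set Rc : Finset V := R.base.filter
    (fun β => ∀ h : β ∈ R.base, R.baseGraph.Reachable a ⟨β, h⟩) with hRc
  have hmemRc : ∀ (b : {x : V // x ∈ R.base}),
      (b : V) ∈ Rc ↔ R.baseGraph.Reachable a b := by
    intro b
    constructor
    · intro h
      have hr := (Finset.mem_filter.1 h).2 b.2
      rwa [show (⟨(b : V), b.2⟩ : {x : V // x ∈ R.base}) = b from Subtype.ext rfl] at hr
    · intro h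
      refine Finset.mem_filter.2 ⟨b.2, fun h' => ?_⟩
      rwa [show (⟨(b : V), h'⟩ : {x : V // x ∈ R.base}) = b from Subtype.ext rfl]
  have hclosed : ∀ β ∈ Rc, ∀ β' ∈ R.base, β' ∉ Rc → ⟪β, β'⟫ = 0 := by
    intro β hβ β' hβ' hβ'n
    by_contra hnz
    have hβbase : β ∈ R.base := (Finset.mem_filter.1 hβ).1
    apply hβ'n
    have hr : R.baseGraph.Reachable a ⟨β, hβbase⟩ := (hmemRc ⟨β, hβbase⟩).1 hβ
    have hadj : R.baseGraph.Adj ⟨β, hβbase⟩ ⟨β', hβ'⟩ := by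
      refine (⟨?_, hnz⟩ : _ ∧ _)
      intro h
      have hbb : β = β' := congrArg Subtype.val h
      rw [hbb] at hβ
      exact hβ'n hβ
    exact (hmemRc ⟨β', hβ'⟩).2 (hr.trans hadj.reachable)
  have hS : R.Δ.filter (fun γ => ∀ β ∈ R.base, R.coord γ β ≠ 0 → β ∈ Rc) = R.Δ := by
    apply R.irreducible _ (Finset.filter_subset _ _)
    · refine ⟨α, Finset.mem_filter.2 ⟨R.base_sub hα, fun β hβ hne => ?_⟩⟩
      have heq : α = β := by
        by_contra hne2
        rw [R.coord_simple hα hβ, if_neg hne2] at hne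
        exact hne rfl
      rw [← heq]
      exact (hmemRc a).2 (SimpleGraph.Reachable.refl a)
    · intro γ hγS δ hδ hδn
      have hγsupp := (Finset.mem_filter.1 hγS).2
      have hγΔ := (Finset.mem_filter.1 hγS).1
      have hδsupp : ∀ β ∈ R.base, R.coord δ β ≠ 0 → β ∉ Rc := by
        have hdich := R.support_dichotomy Rc hclosed (Finset.filter_subset _ _)
        by_cases hp : δ ∈ R.posRoots
        · rcases hdich δ hp with h | h
          · exact absurd (Finset.mem_filter.2 ⟨hδ, h⟩) hδn
          · exact h
        · have hneg := R.neg_mem_posRoots hδ hp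
          rcases hdich (-δ) hneg with h | h
          · exfalso
            apply hδn
            refine Finset.mem_filter.2 ⟨hδ, fun β hβ hne => h β hβ ?_⟩
            rw [R.coord_neg]
            simpa using hne
          · intro β hβ hne
            refine h β hβ ?_
            rw [R.coord_neg]
            simpa using hne
      conv_lhs => rw [R.root_decomp γ hγΔ]
      rw [sum_inner]
      refine Finset.sum_eq_zero fun β hβ => ?_
      rw [real_inner_smul_left]
      by_cases hc : R.coord γ β = 0
      · rw [hc, zero_mul]
      · have hβRc := hγsupp β hβ hc
        have hzero : ⟪β, δ⟫ = 0 := by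
          conv_lhs => rw [show δ = ∑ β' ∈ R.base, R.coord δ β' • β'
            from R.root_decomp δ hδ]
          rw [inner_sum]
          refine Finset.sum_eq_zero fun β' hβ' => ?_
          rw [real_inner_smul_right]
          by_cases hc' : R.coord δ β' = 0
          · rw [hc', zero_mul]
          · rw [hclosed β hβRc β' hβ' (hδsupp β' hβ' hc'), mul_zero]
        rw [hzero, mul_zero]
  intro b
  have hbS : (b : V) ∈ R.Δ.filter (fun γ => ∀ β ∈ R.base, R.coord γ β ≠ 0 → β ∈ Rc) := by
    rw [hS]
    exact R.base_sub b.2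
  have hb := (Finset.mem_filter.1 hbS).2 (b : V) b.2 (by
    rw [R.coord_simple b.2 b.2, if_pos rfl]
    exact one_ne_zero)
  exact (hmemRc b).1 hb

lemma baseGraph_connected : R.baseGraph.Connected := by
  have : Nonempty {x : V // x ∈ R.base} := ⟨⟨α, hα⟩⟩
  exact ⟨fun u v => (R.base_reachable hα u).symm.trans (R.base_reachable hα v)⟩

end Graph

end RootSystemData

namespace RootSystemData

variable {V : Type*} [NormedAddCommGroup V] [InnerProductSpace ℝ V]

section Geodesic

variable (R : RootSystemData V) {α : V} (hα : α ∈ R.base)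

include hα

lemma exists_Zprime_root (b : {x : V // x ∈ R.base}) (hneb : (b : V) ≠ α) :
    ∃ ζ, ζ ∈ R.posRoots ∧ R.coord ζ α = 0 ∧ ⟪ζ, α⟫ ≠ 0 ∧ R.coord ζ (b : V) ≠ 0 ∧
      (∀ b' : {x : V // x ∈ R.base}, R.coord ζ (b' : V) ≠ 0 →
        R.baseGraph.dist ⟨α, hα⟩ b' ≤ R.baseGraph.dist ⟨α, hα⟩ b ∧
        (R.baseGraph.dist ⟨α, hα⟩ b' = R.baseGraph.dist ⟨α, hα⟩ b → b' = b)) := by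
  classical
  set a : {x : V // x ∈ R.base} := ⟨α, hα⟩ with haa
  have hconn := R.baseGraph_connected hα
  have hreach : R.baseGraph.Reachable a b := R.base_reachable hα b
  set d := R.baseGraph.dist a b with hd
  have hane : a ≠ b := fun h => hneb (by rw [← h])
  have hdpos : 0 < d := hreach.pos_dist_of_ne hane
  obtain ⟨w, hw⟩ := hreach.exists_walk_length_eq_dist
  have hadj : ∀ i, i < d → R.baseGraph.Adj (w.getVert i) (w.getVert (i + 1)) := by
    intro i hi
    exact w.adj_getVert_succ (by rw [hw, ← hd]; exact hi)
  have hadj1 : ∀ u v : {x : V // x ∈ R.base}, R.baseGraph.Adj u v →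
      R.baseGraph.dist u v ≤ 1 := by
    intro u v h
    simpa using SimpleGraph.dist_le h.toWalk
  have hdist_le : ∀ i, i ≤ d → R.baseGraph.dist a (w.getVert i) ≤ i := by
    intro i
    induction i with
    | zero => intro _; rw [w.getVert_zero]; simp [SimpleGraph.dist_self]
    | succ i ih =>
        intro hi
        have h1 := ih (le_of_lt (Nat.lt_of_succ_le hi))
        have h2 := hadj1 _ _ (hadj i (Nat.lt_of_succ_le hi))
        have h3 := hconn.dist_triangle (u := a) (v := w.getVert i) (w := w.getVert (i+1))
        omega
  have hdist_to_b : ∀ j i, i + j = d → R.baseGraph.dist (w.getVert i) b ≤ j := by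
    intro j
    induction j with
    | zero =>
        intro i hi
        have hieq : i = d := by omega
        rw [hieq, show d = w.length from by rw [hw, ← hd], w.getVert_length]
        simp [SimpleGraph.dist_self]
    | succ j ih =>
        intro i hi
        have hlt : i < d := by omega
        have h2 := hadj1 _ _ (hadj i hlt)
        have h3 := ih (i+1) (by omega)
        have h4 := hconn.dist_triangle (u := w.getVert i) (v := w.getVert (i+1)) (w := b)
        omega
  have hdist_eq : ∀ i, i ≤ d → R.baseGraph.dist a (w.getVert i) = i := by
    intro i hi
    have h1 := hdist_le i hi
    have h2 := hdist_to_b (d - i) i (by omega)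
    have h3 := hconn.dist_triangle (u := a) (v := w.getVert i) (w := b)
    rw [← hd] at h3
    omega
  have hvd : w.getVert d = b := by
    rw [show d = w.length from by rw [hw, ← hd]]
    exact w.getVert_length
  -- vertices at positive distance differ from α
  have hv_ne_a : ∀ i, 1 ≤ i → i ≤ d → ((w.getVert i : V)) ≠ α := by
    intro i h1 h2 heq
    have hsub : w.getVert i = a := Subtype.ext heq
    have := hdist_eq i h2
    rw [hsub, SimpleGraph.dist_self] at this
    omega
  -- orthogonality of far-apart vertices
  have horth : ∀ i j, j ≤ d → i + 2 ≤ j →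
      ⟪((w.getVert i : V)), ((w.getVert j : V))⟫ = 0 := by
    intro i j hj hij
    have hi : i ≤ d := by omega
    have hne : w.getVert i ≠ w.getVert j := by
      intro h
      have e1 := hdist_eq i hi
      have e2 := hdist_eq j hj
      rw [h] at e1
      omega
    by_contra hnz
    have hadj2 : R.baseGraph.Adj (w.getVert i) (w.getVert j) := (⟨hne, hnz⟩ : _ ∧ _)
    have h2 := hadj1 _ _ hadj2
    have h3 := hconn.dist_triangle (u := a) (v := w.getVert i) (w := w.getVert j)
    have e1 := hdist_eq i hi
    have e2 := hdist_eq j hj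
    omega
  -- adjacency α and first vertex; consecutive inner products negative
  have hconsec : ∀ i, i < d → ⟪((w.getVert i : V)), ((w.getVert (i+1) : V))⟫ < 0 := by
    intro i hi
    obtain ⟨hne, hnz⟩ : _ ∧ _ := hadj i hi
    have hne' : ((w.getVert i : V)) ≠ ((w.getVert (i+1) : V)) :=
      fun h => hne (Subtype.ext h)
    have := R.simples_inner_nonpos (w.getVert i).2 (w.getVert (i+1)).2 hne'
    exact lt_of_le_of_ne this hnz
  -- the candidate root: sum of vertices 1..d
  set σ : ℕ → V := fun k => ∑ i ∈ Finset.range k, ((w.getVert (i+1) : V)) with hσ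
  have hcoordσ : ∀ k, ∀ χ ∈ R.base, R.coord (σ k) χ
      = ∑ i ∈ Finset.range k, (if ((w.getVert (i+1) : V)) = χ then (1:ℝ) else 0) := by
    intro k χ hχ
    rw [hσ, R.coord_sum]
    exact Finset.sum_congr rfl fun i _ => R.coord_base χ hχ _ (w.getVert (i+1)).2
  have hcoord_nonneg : ∀ k, ∀ χ ∈ R.base, 0 ≤ R.coord (σ k) χ := by
    intro k χ hχ
    rw [hcoordσ k χ hχ]
    apply Finset.sum_nonneg
    intro i _
    split <;> norm_num
  -- vertices are pairwise distinct (via distances)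
  have hvert_ne : ∀ i j, i ≤ d → j ≤ d → i ≠ j → w.getVert i ≠ w.getVert j := by
    intro i j hi hj hne h
    have e1 := hdist_eq i hi
    have e2 := hdist_eq j hj
    rw [h] at e1
    omega
  -- coordinates at vertices of the path
  have hcoord_at : ∀ k, k ≤ d → ∀ j, j < k →
      R.coord (σ k) ((w.getVert (j+1) : V)) = 1 := by
    intro k hk j hj
    rw [hcoordσ k _ (w.getVert (j+1)).2]
    rw [Finset.sum_eq_single j]
    · rw [if_pos rfl]
    · intro i hi hne
      rw [if_neg]
      intro h
      exact hvert_ne (i+1) (j+1) (by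
        have := Finset.mem_range.1 hi
        omega) (by omega) (by omega) (Subtype.ext h)
    · intro h
      exact absurd (Finset.mem_range.2 hj) h
  -- membership in Δ by induction
  have hmemσ : ∀ k, 1 ≤ k → k ≤ d → σ k ∈ R.Δ := by
    intro k
    induction k with
    | zero => omega
    | succ k ih =>
        intro _ hk1
        by_cases hk0 : k = 0
        · subst hk0
          have : σ 1 = ((w.getVert 1 : V)) := by
            rw [hσ]
            simp
          rw [this]
          exact R.base_sub (w.getVert 1).2
        · have hk : 1 ≤ k := by omega
          have hkd : k ≤ d := by omega
          have hσk := ih hk hkd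
          have hsplit : σ (k+1) = σ k + ((w.getVert (k+1) : V)) := by
            rw [hσ]
            exact Finset.sum_range_succ _ k
          -- inner product of σ k with the new vertex
          have hinner : ⟪σ k, ((w.getVert (k+1) : V))⟫
              = ⟪((w.getVert k : V)), ((w.getVert (k+1) : V))⟫ := by
            rw [hσ, sum_inner]
            rw [Finset.sum_eq_single (k-1)]
            · rw [show k - 1 + 1 = k from by omega]
            · intro i hi hne
              apply horth (i+1) (k+1) (by omega)
              have := Finset.mem_range.1 hi
              omega
            · intro h
              exact absurd (Finset.mem_range.2 (by omega)) h
          have hneg : ⟪σ k, ((w.getVert (k+1) : V))⟫ < 0 := by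
            rw [hinner]
            exact hconsec k (by omega)
          have hnever : σ k ≠ -((w.getVert (k+1) : V)) := by
            intro h
            have h1 : R.coord (σ k) ((w.getVert 1 : V)) = 1 := hcoord_at k hkd 0 (by omega)
            rw [h, R.coord_neg, R.coord_base _ (w.getVert 1).2 _ (w.getVert (k+1)).2] at h1
            rw [if_neg (fun hh => hvert_ne (k+1) 1 (by omega) (by omega) (by omega)
              (Subtype.ext hh))] at h1
            norm_num at h1
          have := R.add_mem_of_inner_neg hσk (R.base_sub (w.getVert (k+1)).2) hneg hnever
          rwa [← hsplit] at this
  -- now ζ := σ d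
  refine ⟨σ d, ?_, ?_, ?_, ?_, ?_⟩
  · exact (R.mem_posRoots).2 ⟨hmemσ d (by omega) le_rfl, hcoord_nonneg d⟩
  · rw [hcoordσ d α hα]
    refine Finset.sum_eq_zero fun i hi => ?_
    rw [if_neg]
    exact hv_ne_a (i+1) (by omega) (by
      have := Finset.mem_range.1 hi
      omega)
  · -- inner product with α is negative
    have hcalc : ⟪σ d, α⟫ = ⟪((w.getVert 1 : V)), α⟫ := by
      rw [hσ, sum_inner]
      rw [Finset.sum_eq_single 0]
      · intro i hi hne
        have hia : ⟪((w.getVert 0 : V)), ((w.getVert (i+1) : V))⟫ = 0 :=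
          horth 0 (i+1) (by have := Finset.mem_range.1 hi; omega) (by omega)
        rw [w.getVert_zero] at hia
        rw [real_inner_comm]
        exact hia
      · intro h
        exact absurd (Finset.mem_range.2 (by omega)) h
    have h1 : ⟪((w.getVert 0 : V)), ((w.getVert 1 : V))⟫ < 0 := hconsec 0 hdpos
    rw [w.getVert_zero] at h1
    rw [hcalc]
    have : ⟪((w.getVert 1 : V)), α⟫ < 0 := by rwa [real_inner_comm]
    linarith
  · -- coordinate at b is 1
    have h1 : R.coord (σ d) ((w.getVert ((d-1)+1) : V)) = 1 :=
      hcoord_at d le_rfl (d-1) (by omega)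
    rw [show d - 1 + 1 = d from by omega, hvd] at h1
    rw [h1]
    norm_num
  · -- the distance property
    intro b' hb'
    rw [hcoordσ d _ b'.2] at hb'
    obtain ⟨i, hi, hine⟩ := Finset.exists_ne_zero_of_sum_ne_zero hb'
    have hieq : ((w.getVert (i+1) : V)) = (b' : V) := by
      by_contra h
      rw [if_neg h] at hine
      exact hine rfl
    have hsub : w.getVert (i+1) = b' := Subtype.ext hieq
    have hirange := Finset.mem_range.1 hi
    have hdist := hdist_eq (i+1) (by omega)
    rw [hsub] at hdist
    constructor
    · omega
    · intro heq
      have hii : i + 1 = d := by omega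
      rw [← hsub, hii, hvd]
end Geodesic

end RootSystemData

namespace RootSystemData

variable {V : Type*} [NormedAddCommGroup V] [InnerProductSpace ℝ V]

section Count

variable (R : RootSystemData V) {α : V} (hα : α ∈ R.base)

include hα

lemma card_Zprime :
    (R.base.card - 1 : ℕ) ≤
      (R.posRoots.filter (fun γ => R.coord γ α = 0 ∧ ⟪γ, α⟫ ≠ 0)).card := by
  classical
  set Z' := R.posRoots.filter (fun γ => R.coord γ α = 0 ∧ ⟪γ, α⟫ ≠ 0) with hZ'
  have hex : ∀ β, ∀ hβ : β ∈ R.base.erase α, ∃ ζ, ζ ∈ Z' ∧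
      R.coord ζ β ≠ 0 ∧
      (∀ b' : {x : V // x ∈ R.base}, R.coord ζ (b' : V) ≠ 0 →
        R.baseGraph.dist ⟨α, hα⟩ b' ≤
          R.baseGraph.dist ⟨α, hα⟩ ⟨β, (Finset.mem_erase.1 hβ).2⟩ ∧
        (R.baseGraph.dist ⟨α, hα⟩ b' =
          R.baseGraph.dist ⟨α, hα⟩ ⟨β, (Finset.mem_erase.1 hβ).2⟩ →
          b' = ⟨β, (Finset.mem_erase.1 hβ).2⟩)) := by
    intro β hβ
    obtain ⟨ζ, h1, h2, h3, h4, h5⟩ :=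
      R.exists_Zprime_root hα ⟨β, (Finset.mem_erase.1 hβ).2⟩ (Finset.mem_erase.1 hβ).1
    exact ⟨ζ, Finset.mem_filter.2 ⟨h1, h2, h3⟩, h4, h5⟩
  choose f hf using hex
  set g : V → V := fun β => if h : β ∈ R.base.erase α then f β h else 0 with hg
  have hcard : (R.base.erase α).card ≤ Z'.card := by
    refine Finset.card_le_card_of_injOn g (fun β hβ => ?_) ?_
    · rw [hg]
      simp only [dif_pos hβ]
      rw [dif_pos (Finset.mem_coe.1 hβ)]; exact (hf β hβ).1
    · intro β hβ β' hβ' heq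
      simp only [Finset.mem_coe] at hβ hβ'
      rw [hg] at heq
      simp only [dif_pos hβ, dif_pos hβ'] at heq
      obtain ⟨hζ1, hc1, hd1⟩ := hf β hβ
      obtain ⟨hζ2, hc2, hd2⟩ := hf β' hβ'
      rw [heq] at hc1 hd1
      -- now f β' hβ' has nonzero coordinates at both β and β'
      set bb : {x : V // x ∈ R.base} := ⟨β, (Finset.mem_erase.1 hβ).2⟩ with hbb
      set bb' : {x : V // x ∈ R.base} := ⟨β', (Finset.mem_erase.1 hβ').2⟩ with hbb'
      have e1 := hd1 bb hc1
      have e2 := hd2 bb' hc2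
      have e3 := hd1 bb' hc2
      have e4 := hd2 bb hc1
      have hdeq : R.baseGraph.dist ⟨α, hα⟩ bb' = R.baseGraph.dist ⟨α, hα⟩ bb := by
        omega
      have := e3.2 hdeq
      have hsub : bb' = bb := this
      have : β' = β := congrArg Subtype.val hsub
      exact this.symm
  rw [Finset.card_erase_of_mem hα] at hcard
  exact hcard

end Count

end RootSystemData

/-- For every simple root `α` one has `q_α ≤ h` (the Coxeter number),
with equality iff `ϖ_α` is minuscule, and moreover `q_α ≥ rk Δ + 1`. -/
theorem q_le_coxeter_and_minuscule_iff
    {V : Type*} [NormedAddCommGroup V] [InnerProductSpace ℝ V]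
    (R : RootSystemData V) (α : V) (hα : α ∈ R.base)
    (θ : V) (hθ : θ ∈ R.Δ)
    (hθmax : ∀ γ ∈ R.Δ, ∀ β ∈ R.base, R.coord γ β ≤ R.coord θ β)
    (q : ℕ) (hq : (∑ γ ∈ R.Rset α, γ) = (q : ℝ) • R.fw α) :
    (q : ℝ) ≤ R.ht θ + 1 ∧
    ((q : ℝ) = R.ht θ + 1 ↔ ∀ γ ∈ R.posRoots, 2 * ⟪R.fw α, γ⟫ / ⟪γ, γ⟫ ≤ 1) ∧
    R.base.card + 1 ≤ q := by
  classical
  obtain ⟨h1, h2⟩ := R.main_upper hα hθ hθmax q hq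
  refine ⟨h1, h2, ?_⟩
  have hsplit := R.q_split hα q hq
  set Z := R.posRoots.filter (fun γ => R.coord γ α = 0) with hZ
  set Z' := R.posRoots.filter (fun γ => R.coord γ α = 0 ∧ ⟪γ, α⟫ ≠ 0) with hZ'
  have hZ'sub : Z' ⊆ Z := by
    intro γ h
    obtain ⟨hp, hc, _⟩ := Finset.mem_filter.1 h
    exact Finset.mem_filter.2 ⟨hp, hc⟩
  have hαα := R.root_inner_self_pos (R.base_sub hα)
  have hnonneg : ∀ γ ∈ Z, 0 ≤ -(2 * ⟪γ, α⟫ / ⟪α, α⟫) := by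
    intro γ h
    obtain ⟨hp, hc⟩ := Finset.mem_filter.1 h
    have hle := R.level0_inner_nonpos hα hp hc
    have : 2 * ⟪γ, α⟫ / ⟪α, α⟫ ≤ 0 :=
      div_nonpos_of_nonpos_of_nonneg (by linarith) hαα.le
    linarith
  have hone : ∀ γ ∈ Z', 1 ≤ -(2 * ⟪γ, α⟫ / ⟪α, α⟫) := by
    intro γ h
    obtain ⟨hp, hc, hne⟩ := Finset.mem_filter.1 h
    obtain ⟨k, hk⟩ := R.crystallographic α (R.base_sub hα) γ (R.posRoots_subset hp)
    have hle := R.level0_inner_nonpos hα hp hc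
    have hle2 : (k:ℝ) ≤ 0 := by
      rw [← hk]
      exact div_nonpos_of_nonpos_of_nonneg (by linarith) hαα.le
    have hne0 : (k:ℝ) ≠ 0 := by
      rw [← hk]
      apply div_ne_zero _ (ne_of_gt hαα)
      intro hcon
      apply hne
      linarith
    have hklean : k ≤ -1 := by
      have ha : k ≤ 0 := by exact_mod_cast hle2
      have hb : k ≠ 0 := by exact_mod_cast hne0
      omega
    rw [hk]
    have : (k:ℝ) ≤ -1 := by exact_mod_cast hklean
    linarith
  have hsum1 : (Z'.card : ℝ) ≤ ∑ γ ∈ Z', -(2 * ⟪γ, α⟫ / ⟪α, α⟫) := by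
    calc (Z'.card : ℝ) = ∑ _γ ∈ Z', (1:ℝ) := by
          rw [Finset.sum_const, nsmul_eq_mul, mul_one]
    _ ≤ _ := Finset.sum_le_sum hone
  have hsum2 : ∑ γ ∈ Z', -(2 * ⟪γ, α⟫ / ⟪α, α⟫) ≤ ∑ γ ∈ Z, -(2 * ⟪γ, α⟫ / ⟪α, α⟫) :=
    Finset.sum_le_sum_of_subset_of_nonneg hZ'sub (fun γ hγ _ => hnonneg γ hγ)
  have hcard := R.card_Zprime hα
  have hqval : (q:ℝ) = 2 + ∑ γ ∈ Z, -(2 * ⟪γ, α⟫ / ⟪α, α⟫) := by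
    rw [Finset.sum_neg_distrib]
    linarith
  have hcard1 : 1 ≤ R.base.card := Finset.card_pos.2 ⟨α, hα⟩
  have hcardR : ((R.base.card - 1 : ℕ) : ℝ) ≤ (Z'.card : ℝ) := by exact_mod_cast hcard
  have hcastc : ((R.base.card - 1 : ℕ) : ℝ) = (R.base.card : ℝ) - 1 := by
    push_cast [Nat.cast_sub hcard1]
    ring
  rw [hcastc] at hcardR
  have hfin : (R.base.card : ℝ) + 1 ≤ (q:ℝ) := by linarith
  exact_mod_cast hfin
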